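/- arXiv:1301.1718 — 13 statements merged into one kernel-verified Lean document; each statement's English description precedes it below -/
import Mathlib

section
/- Let r be an odd prime. With γ, m, u, v, η as in the setup, if the minimal polynomial P of η over ℚ has degree at most r, then P = X^r − γ^r or P = X^r + γ^r. -/
open Polynomial

lemma aux_dvd (r d : ℕ) (hrp : r.Prime) (γ : ℝ) (hγpos : 0 < γ) (hγirr : Irrational γ)
    (q c : ℚ) (hq : γ ^ r = (q:ℝ)) (hc : γ ^ d = (c:ℝ)) : r ∣ d := by
  by_contra hnd
  have hcop : Nat.Coprime r d := (Nat.Prime.coprime_iff_not_dvd hrp).mpr hnd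
  have hbez := Nat.gcd_eq_gcd_ab r d
  rw [hcop] at hbez
  have hγ0 : γ ≠ 0 := ne_of_gt hγpos
  have : γ = ((q ^ Nat.gcdA r d * c ^ Nat.gcdB r d : ℚ) : ℝ) := by
    push_cast
    rw [← hq, ← hc, ← zpow_natCast γ r, ← zpow_natCast γ d, ← zpow_mul, ← zpow_mul,
      ← zpow_add₀ hγ0, ← hbez]
    simp
  exact hγirr ⟨_, this.symm⟩

lemma aux_eq_of_monic_dvd {K : Type*} [Field K] {p g : K[X]} (hp : p.Monic) (hg : g.Monic)
    (hdvd : p ∣ g) (hdeg : p.natDegree = g.natDegree) : p = g := by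
  obtain ⟨c, hc⟩ := hdvd
  have hc0 : c ≠ 0 := by
    rintro rfl
    simp only [mul_zero] at hc
    exact hg.ne_zero hc
  have hdegc : c.natDegree = 0 := by
    have := hc ▸ natDegree_mul hp.ne_zero hc0
    omega
  have hlc : c.leadingCoeff = 1 := by
    have := congrArg leadingCoeff hc
    rwa [hg.leadingCoeff, leadingCoeff_mul, hp.leadingCoeff, one_mul, eq_comm] at this
  rw [leadingCoeff, hdegc] at hlc
  have hc1 : c = 1 := by
    rw [eq_C_of_natDegree_eq_zero hdegc, hlc, map_one]
  rw [hc, hc1, mul_one]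

theorem stmt_2 (r : ℕ) (hrp : r.Prime) (hodd : Odd r)
    (m : ℕ) (u v : ℤ) (hu : 1 ≤ u)
    (huv : Int.gcd u v = 1) (hru : Int.gcd (r : ℤ) u = 1) (hrv : Int.gcd (r : ℤ) v = 1)
    (γ : ℝ) (hγpos : 0 < γ) (hγirr : Irrational γ) (hγr : ∃ q : ℚ, γ ^ r = (q : ℝ))
    (η : ℂ)
    (hη : η = (γ : ℂ) *
      Complex.exp (2 * (Real.pi : ℂ) * Complex.I * (v : ℂ) / ((r : ℂ) ^ m * (u : ℂ))))
    (hdeg : (minpoly ℚ η).natDegree ≤ r) :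
    (minpoly ℚ η).map (algebraMap ℚ ℂ) = X ^ r - Polynomial.C ((γ : ℂ) ^ r) ∨
    (minpoly ℚ η).map (algebraMap ℚ ℂ) = X ^ r + Polynomial.C ((γ : ℂ) ^ r) := by
  obtain ⟨q, hq⟩ := hγr
  have hr0 : 0 < r := hrp.pos
  have hq0 : (0:ℝ) < (q:ℝ) := hq ▸ pow_pos hγpos r
  set ζ : ℂ := Complex.exp (2 * (Real.pi : ℂ) * Complex.I * (v : ℂ) / ((r : ℂ) ^ m * (u : ℂ))) with hζdef
  set n : ℕ := r ^ m * u.toNat with hn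
  have hn0 : 0 < n := Nat.mul_pos (pow_pos hr0 m) (by omega)
  have hζn : ζ ^ n = 1 := by
    have hr : (r:ℂ) ≠ 0 := Nat.cast_ne_zero.mpr hr0.ne'
    have huc : (u:ℂ) ≠ 0 := Int.cast_ne_zero.mpr (by omega)
    have hun : ((u.toNat : ℕ) : ℂ) = (u : ℂ) := by
      rw [← Int.cast_natCast, Int.toNat_of_nonneg (by omega : (0:ℤ) ≤ u)]
    rw [hζdef, ← Complex.exp_nat_mul]
    have heq : ((n : ℕ) : ℂ) * (2 * (Real.pi : ℂ) * Complex.I * (v : ℂ) / ((r : ℂ) ^ m * (u : ℂ)))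
        = (v : ℂ) * (2 * (Real.pi:ℂ) * Complex.I) := by
      rw [hn]
      push_cast [hun]
      field_simp
    rw [heq, Complex.exp_int_mul_two_pi_mul_I]
  have hqc : ((γ:ℂ)) ^ r = (q : ℂ) := by exact_mod_cast congrArg (Complex.ofReal) hq
  have hqcne : (q:ℂ) ≠ 0 := by exact_mod_cast hq0.ne'
  have hηrn : η ^ (r * n) = (q : ℂ) ^ n := by
    have hζrn : ζ ^ (r * n) = 1 := by rw [mul_comm r n, pow_mul, hζn, one_pow]
    rw [hη, mul_pow, hζrn, mul_one, pow_mul, hqc]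
  have haeval : (Polynomial.aeval η) (X ^ (r*n) - C (q ^ n)) = 0 := by
    simp [hηrn]
  have halg : IsIntegral ℚ η :=
    ⟨X ^ (r*n) - C (q ^ n), monic_X_pow_sub_C _ (by positivity), by simpa using haeval⟩
  set P := (minpoly ℚ η).map (algebraMap ℚ ℂ) with hP
  set d := (minpoly ℚ η).natDegree with hd
  have hmono := minpoly.monic halg
  have hPne : P ≠ 0 := (hmono.map _).ne_zero
  have hdvd : minpoly ℚ η ∣ X ^ (r*n) - C (q ^ n) := minpoly.dvd ℚ η haeval
  -- all complex roots of P have absolute value γ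
  have habs : ∀ z ∈ P.roots, ‖z‖ = γ := by
    intro z hz
    have hPdvd : P ∣ (X ^ (r*n) - C (q ^ n)).map (algebraMap ℚ ℂ) := Polynomial.map_dvd _ hdvd
    have h3 := (isRoot_of_mem_roots hz).dvd hPdvd
    have hzroot : z ^ (r * n) = (q:ℂ) ^ n := by
      simpa [sub_eq_zero, IsRoot] using h3
    have h4 : ‖z‖ ^ (r * n) = γ ^ (r * n) := by
      have h5 := congrArg (‖·‖) hzroot
      rw [norm_pow, norm_pow] at h5
      have h6 : ‖(q:ℂ)‖ = (q:ℝ) := by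
        rw [Complex.norm_ratCast, abs_of_pos hq0]
      rw [h5, h6, ← hq, ← pow_mul]
    exact (pow_left_strictMonoOn₀ (by positivity : r * n ≠ 0)).injOn
      (norm_nonneg z) hγpos.le h4
  -- product of roots: γ ^ d is rational
  have hsplit : P.Splits := IsAlgClosed.splits P
  have hcard : P.roots.card = d := by
    rw [splits_iff_card_roots.mp hsplit, hP, natDegree_map, hd]
  have hc0 : P.coeff 0 = (-1) ^ P.natDegree * P.roots.prod :=
    hsplit.coeff_zero_eq_prod_roots_of_monic (hmono.map _)
  have habs0 : ‖P.coeff 0‖ = γ ^ d := by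
    have h9 : (P.roots.map (‖·‖)).prod = γ ^ d := by
      have hrep : P.roots.map (‖·‖)
          = Multiset.replicate (Multiset.card (P.roots.map (‖·‖))) γ := by
        rw [Multiset.eq_replicate_card]
        intro x hx
        obtain ⟨z, hz, rfl⟩ := Multiset.mem_map.mp hx
        exact habs z hz
      rw [hrep, Multiset.prod_replicate, Multiset.card_map, hcard]
    rw [hc0, norm_mul, show ‖P.roots.prod‖ = (P.roots.map (‖·‖)).prod from
        map_multiset_prod (normHom : ℂ →*₀ ℝ) _, h9]
    simp
  have hγd : γ ^ d = ((|(minpoly ℚ η).coeff 0| : ℚ) : ℝ) := by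
    have h10 : P.coeff 0 = (((minpoly ℚ η).coeff 0 : ℚ) : ℂ) := by
      rw [hP, coeff_map, eq_ratCast]
    rw [← habs0, h10, ← Complex.ofReal_ratCast, Complex.norm_real, Real.norm_eq_abs, Rat.cast_abs]
  have hdpos : 0 < d := minpoly.natDegree_pos halg
  have hrdvd : r ∣ d := aux_dvd r d hrp γ hγpos hγirr q _ hq hγd
  have hdr : d = r := le_antisymm hdeg (Nat.le_of_dvd hdpos hrdvd)
  -- the root of unity ω = ζ^r
  set ω : ℂ := ζ ^ r with hωdef
  have hωn : ω ^ n = 1 := by rw [hωdef, ← pow_mul, mul_comm, pow_mul, hζn, one_pow]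
  have hηr : η ^ r = (q:ℂ) * ω := by rw [hη, mul_pow, hqc, hωdef]
  have hωfin : IsOfFinOrder ω := isOfFinOrder_iff_pow_eq_one.mpr ⟨n, hn0, hωn⟩
  have hk0 : 0 < orderOf ω := hωfin.orderOf_pos
  by_cases hk2 : 2 < orderOf ω
  · exfalso
    have hprim : IsPrimitiveRoot ω (orderOf ω) := IsPrimitiveRoot.orderOf ω
    set K := IntermediateField.adjoin ℚ ({η} : Set ℂ) with hK
    haveI : FiniteDimensional ℚ K := IntermediateField.adjoin.finiteDimensional halg
    have hηK : η ∈ K := IntermediateField.mem_adjoin_simple_self ℚ η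
    have hqK : ((q:ℚ):ℂ) ∈ K := by
      have h7 : algebraMap ℚ ℂ q ∈ K := IntermediateField.algebraMap_mem K q
      simpa using h7
    have hωK : ω ∈ K := by
      have h8 : ω = η ^ r * ((q:ℚ):ℂ)⁻¹ := by
        rw [hηr]
        field_simp
      rw [h8]
      exact mul_mem (pow_mem hηK r) (inv_mem hqK)
    set x : K := ⟨ω, hωK⟩ with hx
    have hxω : algebraMap K ℂ x = ω := rfl
    have hminx : minpoly ℚ x = minpoly ℚ ω := by
      rw [← hxω, minpoly.algebraMap_eq (algebraMap K ℂ).injective]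
    have hfr : Module.finrank ℚ K = (minpoly ℚ η).natDegree :=
      IntermediateField.adjoin.finrank halg
    have hdvd2 : (minpoly ℚ x).natDegree ∣ Module.finrank ℚ K :=
      minpoly.degree_dvd (IsIntegral.of_finite ℚ x)
    rw [hminx, hfr, ← hd, hdr] at hdvd2
    rw [← cyclotomic_eq_minpoly_rat hprim hk0, natDegree_cyclotomic] at hdvd2
    have heven : Even (orderOf ω).totient := Nat.totient_even hk2
    have h2r : (2:ℕ) ∣ r := dvd_trans heven.two_dvd hdvd2
    rw [Nat.odd_iff] at hodd
    omega
  · -- orderOf ω ≤ 2, so ω = ±1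
    have hωpm : ω = 1 ∨ ω = -1 := by
      have hcase : orderOf ω = 1 ∨ orderOf ω = 2 := by omega
      have hω2 : ω * ω = 1 := by
        rcases hcase with h | h
        · rw [orderOf_eq_one_iff.mp h]; norm_num
        · have h11 := pow_orderOf_eq_one ω
          rw [h, pow_two] at h11
          exact h11
      exact mul_self_eq_one_iff.mp hω2
    rcases hωpm with h1 | h1
    · left
      have hηr' : η ^ r = (q:ℂ) := by rw [hηr, h1, mul_one]
      have hdvd3 : minpoly ℚ η ∣ X ^ r - C q := minpoly.dvd ℚ η (by simp [hηr'])
      have heq : minpoly ℚ η = X ^ r - C q :=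
        aux_eq_of_monic_dvd hmono (monic_X_pow_sub_C q hr0.ne') hdvd3
          (by rw [← hd, hdr, natDegree_X_pow_sub_C])
      rw [hP, heq, Polynomial.map_sub, Polynomial.map_pow, map_X, map_C, eq_ratCast, hqc]
    · right
      have hηr' : η ^ r = -(q:ℂ) := by rw [hηr, h1, mul_neg_one]
      have hdvd3 : minpoly ℚ η ∣ X ^ r - C (-q) := minpoly.dvd ℚ η (by simp [hηr'])
      have heq : minpoly ℚ η = X ^ r - C (-q) :=
        aux_eq_of_monic_dvd hmono (monic_X_pow_sub_C (-q) hr0.ne') hdvd3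
          (by rw [← hd, hdr, natDegree_X_pow_sub_C])
      rw [hP, heq, Polynomial.map_sub, Polynomial.map_pow, map_X, map_C, hqc]
      push_cast
      rw [map_neg, sub_neg_eq_add]
      norm_cast
end

section
/- Let r = 2 and assume (u,m) ∉ {(1,3), (3,2)}. With γ, m, u, v, η as in the setup, if the minimal polynomial P of η over ℚ has degree at most 2, then P = X² − γ² or P = X² + γ². -/
open Polynomial Complex

private lemma helper_map (p : ℚ[X]) (hm : p.Monic) (hd : p.natDegree = 2) (c : ℚ)
    (h1 : p.coeff 1 = 0) (h0 : p.coeff 0 = c) :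
    p.map (algebraMap ℚ ℂ) = X ^ 2 + C (c : ℂ) := by
  have h2 : p.coeff 2 = 1 := by simpa [hd] using hm.coeff_natDegree
  have hp : p = X ^ 2 + C c := by
    have := p.as_sum_range' 3 (by omega)
    rw [this]
    simp [Finset.sum_range_succ, h0, h1, h2, Polynomial.monomial_one_right_eq_X_pow]
    ring
  rw [hp]
  simp [Polynomial.map_add, Polynomial.map_pow, map_X, map_C, eq_ratCast (algebraMap ℚ ℂ) c]

private lemma sq_decomp (a b : ℝ) :
    ((a:ℂ) + (b:ℂ)*I)^2 = ((a^2-b^2 : ℝ):ℂ) + ((2*a*b : ℝ):ℂ)*I := by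
  push_cast
  linear_combination (b:ℂ)^2 * Complex.I_sq

private lemma reim_extract (x y : ℝ) (b c : ℚ) (η : ℂ) (hxy : η = (x:ℂ) + (y:ℂ) * I)
    (E : η^2 + (b:ℂ)*η + (c:ℂ) = 0) :
    x^2 - y^2 + (b:ℝ)*x + (c:ℝ) = 0 ∧ 2*x*y + (b:ℝ)*y = 0 := by
  rw [hxy] at E
  have hre := congrArg Complex.re E
  have him := congrArg Complex.im E
  simp [pow_two, Complex.add_re, Complex.add_im, Complex.mul_re, Complex.mul_im] at hre him
  constructor <;> nlinarith [hre, him]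

private lemma rat_int (ζ : ℂ) (N : ℕ) (hN : 0 < N) (hζN : ζ ^ N = 1) (θ : ℝ)
    (hζ : ζ = Complex.exp ((θ:ℂ)*I))
    (w : ℚ) (hw : ((2*Real.cos θ)^2 : ℝ) = (w:ℝ)) : ∃ k : ℤ, (k:ℚ) = w := by
  have hζint : IsIntegral ℤ ζ := by
    apply IsIntegral.of_pow hN
    rw [hζN]; exact isIntegral_one
  have hζinv : ζ⁻¹ = ζ^(N-1) := by
    have : ζ * ζ^(N-1) = 1 := by
      rw [← pow_succ', show N - 1 + 1 = N by omega]; exact hζN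
    exact inv_eq_of_mul_eq_one_right this
  have hzint : IsIntegral ℤ (ζ + ζ⁻¹) := by
    rw [hζinv]; exact hζint.add (hζint.pow _)
  have hz : ζ + ζ⁻¹ = ((2*Real.cos θ : ℝ) : ℂ) := by
    rw [hζ, ← Complex.exp_neg]
    rw [show (-((θ:ℂ) * I)) = (-θ:ℂ) * I by ring, ← Complex.two_cos]
    push_cast
    ring
  have hwint : IsIntegral ℤ (algebraMap ℚ ℂ w) := by
    have : algebraMap ℚ ℂ w = (ζ + ζ⁻¹)^2 := by
      rw [hz, eq_ratCast (algebraMap ℚ ℂ)]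
      rw [show ((w:ℂ)) = (((w:ℝ)):ℂ) by norm_cast, ← hw]
      push_cast; ring
    rw [this]; exact hzint.pow _
  have : IsIntegral ℤ w := IsIntegral.tower_bot (algebraMap ℚ ℂ).injective hwint
  obtain ⟨k, hk⟩ := IsIntegrallyClosed.isIntegral_iff.mp this
  exact ⟨k, by exact_mod_cast hk⟩

set_option maxHeartbeats 2000000 in
/-- Take `r = 2` in the setup: `m ≥ 0`, `u ≥ 1`, `v` integers with
`gcd(u,v) = gcd(2,u) = gcd(2,v) = 1`, `γ` a positive irrational real with `γ² ∈ ℚ`,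
and `η := γ · exp(2π√−1·v/(2^m·u))`.  Assume `(u,m) ∉ {(1,3), (3,2)}`.  If the
minimal polynomial `P` of `η` over `ℚ` has degree at most `2`, then `P = X² − γ²` or
`P = X² + γ²`. -/
theorem stmt_3 (m : ℕ) (u v : ℤ) (hu : 1 ≤ u)
    (huv : Int.gcd u v = 1) (h2u : Int.gcd 2 u = 1) (h2v : Int.gcd 2 v = 1)
    (hexc : ¬((u = 1 ∧ m = 3) ∨ (u = 3 ∧ m = 2)))
    (γ : ℝ) (hγpos : 0 < γ) (hγirr : Irrational γ) (hγr : ∃ q : ℚ, γ ^ 2 = (q : ℝ))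
    (η : ℂ)
    (hη : η = (γ : ℂ) *
      Complex.exp (2 * (Real.pi : ℂ) * Complex.I * (v : ℂ) / ((2 : ℂ) ^ m * (u : ℂ))))
    (hdeg : (minpoly ℚ η).natDegree ≤ 2) :
    (minpoly ℚ η).map (algebraMap ℚ ℂ) = X ^ 2 - Polynomial.C ((γ : ℂ) ^ 2) ∨
    (minpoly ℚ η).map (algebraMap ℚ ℂ) = X ^ 2 + Polynomial.C ((γ : ℂ) ^ 2) := by
  obtain ⟨q, hq⟩ := hγr
  have hγ0 : γ ≠ 0 := ne_of_gt hγpos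
  have hqpos : (0:ℝ) < (q:ℝ) := by rw [← hq]; positivity
  have hq0 : q ≠ 0 := by
    intro h; rw [h] at hqpos; norm_num at hqpos
  have hu0 : (u:ℝ) ≠ 0 := by positivity
  have hden : (2:ℝ)^m * (u:ℝ) ≠ 0 := by positivity
  have key : (2 * (Real.pi:ℂ) * Complex.I * (v:ℂ)) / ((2:ℂ)^m * (u:ℂ))
      = ((2 * Real.pi * v / (2^m * u) : ℝ) : ℂ) * I := by
    push_cast
    field_simp
  rw [key] at hη
  set θ : ℝ := 2 * Real.pi * v / (2^m * u) with hθ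
  set ζ : ℂ := Complex.exp ((θ:ℂ) * I) with hζ
  have hζpow : ∀ K : ℕ, ζ ^ K = Complex.exp (((K * θ : ℝ):ℂ) * I) := by
    intro K
    rw [hζ, ← Complex.exp_nat_mul]
    push_cast; ring_nf
  set N : ℕ := 2^m * u.toNat with hN
  have hut : (u.toNat : ℝ) = (u:ℝ) := by norm_cast; omega
  have hNpos : 0 < N := by
    have : 0 < u.toNat := by omega
    positivity
  have hζN : ζ ^ N = 1 := by
    rw [hζpow]
    have h1 : ((N : ℕ) * θ : ℝ) = v * (2 * Real.pi) := by
      rw [hθ, hN]; push_cast [hut]; field_simp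
    rw [h1]
    push_cast
    rw [show ((v:ℂ) * (2*Real.pi) * I) = v * (2 * Real.pi * I) by ring]
    exact Complex.exp_int_mul_two_pi_mul_I v
  -- divisibility extraction
  have hdvd : ∀ K : ℕ, ζ ^ K = 1 → (2^m * u : ℤ) ∣ (K : ℤ) * v := by
    intro K hK
    rw [hζpow, Complex.exp_eq_one_iff] at hK
    obtain ⟨n, hn⟩ := hK
    have hre : (K * θ : ℝ) = n * (2 * Real.pi) := by
      have := congrArg Complex.im hn
      simpa [Complex.mul_im, Complex.mul_re] using this
    rw [hθ] at hre
    have keyr : ((K:ℤ) * v : ℝ) = ((n * (2^m * u) : ℤ) : ℝ) := by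
      push_cast
      field_simp at hre
      nlinarith [hre, Real.pi_pos]
    have : (K:ℤ) * v = n * (2^m * u) := by exact_mod_cast keyr
    exact ⟨n, by linarith⟩
  -- trig coordinates
  set c0 : ℝ := Real.cos θ with hc0
  set s0 : ℝ := Real.sin θ with hs0
  have hcs : c0^2 + s0^2 = 1 := by
    rw [hc0, hs0]; rw [add_comm]; exact Real.sin_sq_add_cos_sq θ
  have hζc : ζ = (c0:ℂ) + (s0:ℂ)*I := by
    rw [hζ, Complex.exp_mul_I, hc0, hs0]
    push_cast
    ring
  obtain ⟨x, hxd⟩ : ∃ x : ℝ, x = γ * c0 := ⟨_, rfl⟩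
  obtain ⟨y, hyd⟩ : ∃ y : ℝ, y = γ * s0 := ⟨_, rfl⟩
  have hηxy : η = (x:ℂ) + (y:ℂ)*I := by
    rw [hη, hζc, hxd, hyd]; push_cast; ring
  have hx2y2 : x^2 + y^2 = γ^2 := by
    have : x^2 + y^2 = γ^2 * (c0^2 + s0^2) := by rw [hxd, hyd]; ring
    rw [this, hcs, mul_one]
  -- integrality of η
  have hint : IsIntegral ℚ η := by
    apply IsIntegral.of_pow (n := 2 * N) (by positivity)
    have h1 : η ^ (2*N) = (((γ:ℂ))^2)^N * (ζ^N)^2 := by rw [hη]; ring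
    have h2 : η ^ (2*N) = algebraMap ℚ ℂ (q ^ N) := by
      rw [h1, hζN, one_pow, mul_one, show ((γ:ℂ))^2 = (((γ^2 : ℝ)):ℂ) by push_cast; ring, hq]
      push_cast [eq_ratCast (algebraMap ℚ ℂ)]
      norm_cast
    rw [h2]
    exact isIntegral_algebraMap
  -- irrationality helper
  have hirr : ∀ r : ℚ, γ^2 = (r:ℝ)^2 → False := by
    intro r hr
    have : (γ - r)*(γ + r) = 0 := by nlinarith
    rcases mul_eq_zero.mp this with h | h
    · exact hγirr ⟨r, by linarith⟩
    · exact hγirr ⟨-r, by push_cast; linarith⟩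
  -- η is not rational
  have hnotrange : η ∉ (algebraMap ℚ ℂ).range := by
    rintro ⟨r, hr⟩
    rw [eq_ratCast (algebraMap ℚ ℂ)] at hr
    rw [show ((r:ℂ)) = (((r:ℝ)):ℂ) by norm_cast] at hr
    rw [hηxy] at hr
    have hyr : y = 0 := by
      have h' := congrArg Complex.im hr
      simpa using h'.symm
    have hxr : x = (r:ℝ) := by
      have h' := congrArg Complex.re hr
      simpa using h'.symm
    apply hirr r
    rw [← hxr]
    nlinarith [hx2y2, hyr]
  have hd2 : (minpoly ℚ η).natDegree = 2 :=
    le_antisymm hdeg ((minpoly.two_le_natDegree_iff hint).mpr hnotrange)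
  obtain ⟨b, hb⟩ : ∃ b : ℚ, b = (minpoly ℚ η).coeff 1 := ⟨_, rfl⟩
  obtain ⟨c, hc⟩ : ∃ c : ℚ, c = (minpoly ℚ η).coeff 0 := ⟨_, rfl⟩
  have E : η^2 + (b:ℂ)*η + (c:ℂ) = 0 := by
    have h := minpoly.aeval ℚ η
    rw [Polynomial.aeval_eq_sum_range, hd2] at h
    have h2 : (minpoly ℚ η).coeff 2 = 1 := by
      simpa [hd2] using (minpoly.monic hint).coeff_natDegree
    simp [Finset.sum_range_succ, h2, Rat.smul_def] at h
    rw [hb, hc]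
    linear_combination h
  -- real and imaginary equations
  obtain ⟨hre, him⟩ := reim_extract x y b c η hηxy E
  by_cases hy : y = 0
  · -- η real : minpoly = X² - q
    left
    have hy2 : y^2 = 0 := by rw [hy]; ring
    have hx2 : x^2 = γ^2 := by linarith [hx2y2, hy2]
    have hb0 : b = 0 := by
      by_contra hb0
      have hbr : (b:ℝ) ≠ 0 := by exact_mod_cast hb0
      have hbxe : (b:ℝ) * x = -((c:ℝ) + (q:ℝ)) := by
        linear_combination hre - hx2 - hq + y*hy
      have hxv : x = ((-(c + q) : ℚ):ℝ) / (b:ℝ) := by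
        field_simp
        push_cast
        linarith [hbxe]
      apply hirr ((-(c+q))/b)
      rw [← hx2, hxv]
      push_cast
      ring
    have hcq : c = -q := by
      have hb0' : (b:ℝ) = 0 := by exact_mod_cast hb0
      have : (c:ℝ) = ((-q : ℚ):ℝ) := by
        push_cast
        linear_combination hre - hx2 - hq + y*hy - x*hb0'
      exact_mod_cast this
    have hmap := helper_map (minpoly ℚ η) (minpoly.monic hint) hd2 (-q)
      (by rw [← hb]; exact hb0) (by rw [← hc]; exact hcq)
    rw [hmap]
    have : ((-q : ℚ):ℂ) = -((γ:ℂ)^2) := by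
      rw [show ((γ:ℂ))^2 = (((γ^2 : ℝ)):ℂ) by push_cast; ring, hq]
      push_cast
      ring
    rw [this, map_neg]
    ring
  · -- y ≠ 0
    have hbx : (b:ℝ) = -2*x := by
      have : y * ((b:ℝ) + 2*x) = 0 := by linear_combination him
      rcases mul_eq_zero.mp this with h | h
      · exact absurd h hy
      · linear_combination h
    have hcq : c = q := by
      have : (c:ℝ) = (q:ℝ) := by rw [← hq]; linear_combination hre - x*hbx + hx2y2
      exact_mod_cast this
    by_cases hx : x = 0
    · -- minpoly = X² + q
      right
      have hb0 : b = 0 := by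
        have : (b:ℝ) = 0 := by rw [hbx, hx]; ring
        exact_mod_cast this
      have hmap := helper_map (minpoly ℚ η) (minpoly.monic hint) hd2 q
        (by rw [← hb]; exact hb0) (by rw [← hc]; exact hcq)
      rw [hmap]
      have : ((q : ℚ):ℂ) = ((γ:ℂ)^2) := by
        rw [show ((γ:ℂ))^2 = (((γ^2 : ℝ)):ℂ) by push_cast; ring, hq]
        norm_cast
      rw [this]
    · -- x ≠ 0 : derive contradiction
      exfalso
      have hc00 : c0 ≠ 0 := by
        intro h; apply hx; rw [hxd, h, mul_zero]
      set w : ℚ := b^2 / q with hw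
      have hwc : ((2*c0)^2 : ℝ) = (w:ℝ) := by
        rw [hw]
        push_cast
        rw [← hq]
        have hxc : c0 = x / γ := by rw [hxd]; field_simp
        rw [hxc, hbx]
        field_simp
      obtain ⟨k, hk⟩ := rat_int ζ N hNpos hζN θ hζ w hwc
      -- bounds on k
      have hkr : (k:ℝ) = 4*c0^2 := by
        rw [show ((k:ℤ):ℝ) = ((k:ℚ):ℝ) by norm_cast, hk, ← hwc]
        ring
      have hk1 : 1 ≤ k := by
        have : (0:ℝ) < (k:ℝ) := by rw [hkr]; positivity
        exact_mod_cast this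
      have hk4 : k ≤ 4 := by
        have : (k:ℝ) ≤ 4 := by rw [hkr]; linarith [hcs, sq_nonneg s0]
        exact_mod_cast this
      have hbb : (b:ℝ)^2 = 4*x^2 := by rw [hbx]; ring
      interval_cases k
      · -- k = 1 : cos² = 1/4, γ = ±b rational
        have hc14 : c0^2 = 1/4 := by norm_num at hkr; linarith
        apply hirr b
        have hxg : x^2 = γ^2 * c0^2 := by rw [hxd]; ring
        linear_combination -hbb - 4*hxg - 4*γ^2*hc14
      · -- k = 2 : ζ⁴ = -1
        have hc12 : c0^2 = 1/2 := by norm_num at hkr; linarith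
        have hζ4 : ζ^4 = -1 := by
          have h2' : s0^2 = 1/2 := by linarith
          have hsq : ζ^2 = ((2*c0*s0 : ℝ):ℂ)*I := by
            rw [show ζ^2 = ((c0^2-s0^2:ℝ):ℂ) + ((2*c0*s0:ℝ):ℂ)*I by rw [hζc]; exact sq_decomp c0 s0]
            rw [show c0^2 - s0^2 = 0 by linarith]
            simp
          have h4 : ζ^4 = (((2*c0*s0:ℝ):ℂ))^2 * I^2 := by
            rw [show ζ^4 = (ζ^2)^2 by ring, hsq]; ring
          rw [h4, Complex.I_sq]
          have hcs1 : (2*c0*s0)^2 = 1 := by linear_combination 4*s0^2*hc12 + 2*h2'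
          rw [show ((2*c0*s0:ℝ):ℂ)^2 = (((2*c0*s0)^2 : ℝ):ℂ) by push_cast; ring, hcs1]
          simp
        have hζ8 : ζ^8 = 1 := by
          rw [show (8:ℕ) = 4*2 by norm_num, pow_mul, hζ4]; ring
        have hdvd8 := hdvd 8 hζ8
        -- u = 1
        have hu8 : u ∣ 8 := by
          have h1 : u ∣ 8*v := dvd_trans (dvd_mul_left u (2^m)) hdvd8
          have hcop : IsCoprime u v := Int.isCoprime_iff_gcd_eq_one.mpr huv
          exact hcop.dvd_of_dvd_mul_right h1
        have hu1 : u = 1 := by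
          have hle : u ≤ 8 := Int.le_of_dvd (by norm_num) hu8
          interval_cases u <;> revert h2u hu8 <;> decide
        -- 2^m ∣ 8
        have h2m8 : (2:ℤ)^m ∣ 8 := by
          have h1 : (2:ℤ)^m ∣ 8*v := dvd_trans (dvd_mul_right ((2:ℤ)^m) u) hdvd8
          have hcop : IsCoprime ((2:ℤ)^m) v :=
            (Int.isCoprime_iff_gcd_eq_one.mpr h2v).pow_left
          exact hcop.dvd_of_dvd_mul_right h1
        have hm3 : m ≤ 3 := by
          by_contra hm
          have h4m : (2:ℤ)^4 ∣ 2^m := pow_dvd_pow 2 (by omega)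
          have : (16:ℤ) ∣ 8 := by
            calc (16:ℤ) = 2^4 := by norm_num
            _ ∣ 2^m := h4m
            _ ∣ 8 := h2m8
          norm_num at this
        have hmne : m ≠ 3 := fun h => hexc (Or.inl ⟨hu1, h⟩)
        -- so m ≤ 2 : ζ^4 = 1, contradiction
        have hN4 : N ∣ 4 := by
          rw [hN, hu1]
          show 2^m * (1:ℤ).toNat ∣ 4
          rw [show (1:ℤ).toNat = 1 by rfl, mul_one, show (4:ℕ) = 2^2 by norm_num]
          exact pow_dvd_pow 2 (by omega)
        obtain ⟨d, hd⟩ := hN4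
        have : ζ^4 = 1 := by rw [hd, pow_mul, hζN, one_pow]
        rw [hζ4] at this
        norm_num at this
      · -- k = 3 : ζ⁶ = -1
        have hc34 : c0^2 = 3/4 := by norm_num at hkr; linarith
        have h2' : s0^2 = 1/4 := by linarith
        have hsq : ζ^2 = ((1/2 : ℝ):ℂ) + ((2*c0*s0:ℝ):ℂ)*I := by
          rw [show ζ^2 = ((c0^2-s0^2:ℝ):ℂ) + ((2*c0*s0:ℝ):ℂ)*I by rw [hζc]; exact sq_decomp c0 s0]
          norm_num [show c0^2 - s0^2 = 1/2 by linarith]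
        have hζ6 : ζ^6 = -1 := by
          have ht : ((2*c0*s0 : ℝ):ℂ)^2 = 3/4 := by
            rw [show ((2*c0*s0:ℝ):ℂ)^2 = (((2*c0*s0)^2 : ℝ):ℂ) by push_cast; ring]
            rw [show (2*c0*s0)^2 = 3/4 by linear_combination 4*s0^2*hc34 + 3*h2']
            norm_num
          rw [show ζ^6 = (ζ^2)^3 by ring, hsq]
          set t : ℂ := ((2*c0*s0 : ℝ):ℂ) with hts
          rw [show ((1/2:ℝ):ℂ) = 1/2 by norm_num]
          linear_combination ((3/2)*t^2 + t^3*I) * Complex.I_sq + (-(3/2) - t*I) * ht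
        have hζ12 : ζ^12 = 1 := by
          rw [show (12:ℕ) = 6*2 by norm_num, pow_mul, hζ6]; ring
        have hdvd12 := hdvd 12 hζ12
        have hu12 : u ∣ 12 := by
          have h1 : u ∣ 12*v := dvd_trans (dvd_mul_left u (2^m)) hdvd12
          have hcop : IsCoprime u v := Int.isCoprime_iff_gcd_eq_one.mpr huv
          exact hcop.dvd_of_dvd_mul_right h1
        have hu13 : u = 1 ∨ u = 3 := by
          have hle : u ≤ 12 := Int.le_of_dvd (by norm_num) hu12
          interval_cases u <;> revert h2u hu12 <;> decide
        have h2m12 : (2:ℤ)^m ∣ 12 := by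
          have h1 : (2:ℤ)^m ∣ 12*v := dvd_trans (dvd_mul_right ((2:ℤ)^m) u) hdvd12
          have hcop : IsCoprime ((2:ℤ)^m) v :=
            (Int.isCoprime_iff_gcd_eq_one.mpr h2v).pow_left
          exact hcop.dvd_of_dvd_mul_right h1
        have hm2 : m ≤ 2 := by
          by_contra hm
          have h3m : (2:ℤ)^3 ∣ 2^m := pow_dvd_pow 2 (by omega)
          have : (8:ℤ) ∣ 12 := by
            calc (8:ℤ) = 2^3 := by norm_num
            _ ∣ 2^m := h3m
            _ ∣ 12 := h2m12
          norm_num at this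
        -- ζ² has real part 1/2, so ζ² ≠ -1 ; and ζ⁶ = -1 so ζ⁶ ≠ 1
        have hζ2ne : ζ^2 ≠ -1 := by
          rw [hsq]
          intro h
          have := congrArg Complex.re h
          simp at this
          norm_num at this
        rcases hu13 with hu1 | hu3
        · -- u = 1, m ≤ 2 : N ∣ 4 so ζ⁴ = 1, then ζ² = ζ⁶ = -1, contra
          have hN4 : N ∣ 4 := by
            rw [hN, hu1]
            show 2^m * (1:ℤ).toNat ∣ 4
            rw [show (1:ℤ).toNat = 1 by rfl, mul_one, show (4:ℕ) = 2^2 by norm_num]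
            exact pow_dvd_pow 2 (by omega)
          obtain ⟨d, hd⟩ := hN4
          have hζ4 : ζ^4 = 1 := by rw [hd, pow_mul, hζN, one_pow]
          apply hζ2ne
          rw [← hζ6, show ζ^6 = ζ^2 * ζ^4 by ring, hζ4, mul_one]
        · -- u = 3
          have hmne : m ≠ 2 := fun h => hexc (Or.inr ⟨hu3, h⟩)
          have hm1 : m ≤ 1 := by omega
          -- m ≤ 1 : N ∣ 6 so ζ⁶ = 1 ≠ -1
          have hN6 : N ∣ 6 := by
            rw [hN, hu3]
            show 2^m * (3:ℤ).toNat ∣ 6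
            rw [show (3:ℤ).toNat = 3 by rfl]
            interval_cases m <;> norm_num
          obtain ⟨d, hd⟩ := hN6
          have hζ6' : ζ^6 = 1 := by rw [hd, pow_mul, hζN, one_pow]
          rw [hζ6] at hζ6'
          norm_num at hζ6'
      · -- k = 4 : cos² = 1, sin = 0, y = 0 contra
        have hc1 : c0^2 = 1 := by
          norm_num at hkr
          rcases hkr with h|h <;> rw [h] <;> norm_num
        have hs02 : s0^2 = 0 := by linarith [hcs, hc1]
        have hs00 : s0 = 0 := by
          exact pow_eq_zero_iff (two_ne_zero) |>.mp hs02
        exact hy (by rw [hyd, hs00, mul_zero])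
end

section
/- Let r = 2. With γ, m, u, v, η as in the setup, assume the minimal polynomial P of η over ℚ has degree at most 2. If (u,m) = (1,3), then γ/√2 ∈ ℚ and there exists b ∈ ℚ with P = X² + 2bX + 2b². If (u,m) = (3,2), then γ/√3 ∈ ℚ and there exists b ∈ ℚ with P = X² + 3bX + 3b². -/
open Polynomial

private lemma monic_quad_form {p : ℚ[X]} (hm : p.Monic) (h2 : p.natDegree = 2) :
    p = X ^ 2 + C (p.coeff 1) * X + C (p.coeff 0) := by
  have hc2 : p.coeff 2 = 1 := by
    have := hm.coeff_natDegree
    rwa [h2] at this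
  ext i
  rcases i with _ | _ | _ | i
  · simp
  · simp
  · simp [hc2, coeff_X_pow]
  · have h0 : p.coeff (i + 3) = 0 := coeff_eq_zero_of_natDegree_lt (by omega)
    have h1 : i + 3 ≠ 2 := by omega
    have h2' : i + 3 ≠ 1 := by omega
    have h3 : i + 3 ≠ 0 := by omega
    simp [h0, coeff_X_pow, coeff_C, h1, h2', h3]

private lemma core (γ : ℝ) (hγpos : 0 < γ) (η : ℂ) (s : ℚ) (hs : 0 < s)
    (hηγ : η * (starRingEnd ℂ) η = (γ : ℂ) ^ 2)
    (hsum : η ^ 2 + ((starRingEnd ℂ) η) ^ 2 = ((s : ℂ) - 2) * (γ : ℂ) ^ 2)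
    (hne : (starRingEnd ℂ) η ≠ η)
    (hint : IsIntegral ℚ η) (hdeg : (minpoly ℚ η).natDegree ≤ 2) :
    (∃ q : ℚ, γ / Real.sqrt (s : ℝ) = (q : ℝ)) ∧
    ∃ b : ℚ, (minpoly ℚ η).map (algebraMap ℚ ℂ) =
      X ^ 2 + C ((s : ℂ) * (b : ℂ)) * X + C ((s : ℂ) * (b : ℂ) ^ 2) := by
  set P := minpoly ℚ η with hPdef
  have hrange : η ∉ (algebraMap ℚ ℂ).range := by
    rintro ⟨q, rfl⟩
    exact hne (by simp [eq_ratCast])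
  have hnd : P.natDegree = 2 :=
    le_antisymm hdeg ((minpoly.two_le_natDegree_iff hint).mpr hrange)
  have hmonic : P.Monic := minpoly.monic hint
  set c : ℚ := P.coeff 1 with hcdef
  set d : ℚ := P.coeff 0 with hddef
  have hP : P = X ^ 2 + C c * X + C d := monic_quad_form hmonic hnd
  have hroot : η ^ 2 + (c : ℂ) * η + (d : ℂ) = 0 := by
    have h := minpoly.aeval ℚ η
    rw [← hPdef, hP] at h
    simpa [eq_ratCast] using h
  have hconj : ((starRingEnd ℂ) η) ^ 2 + (c : ℂ) * ((starRingEnd ℂ) η) + (d : ℂ) = 0 := by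
    have h := congrArg (starRingEnd ℂ) hroot
    simpa [map_add, map_mul, map_pow, map_ratCast] using h
  have hfac : (η - (starRingEnd ℂ) η) * (η + (starRingEnd ℂ) η + (c : ℂ)) = 0 := by
    linear_combination hroot - hconj
  have hc : (c : ℂ) = -(η + (starRingEnd ℂ) η) := by
    rcases mul_eq_zero.mp hfac with h | h
    · exact absurd (sub_eq_zero.mp h).symm hne
    · linear_combination h
  have hd : (d : ℂ) = η * (starRingEnd ℂ) η := by
    linear_combination hroot - η * hc
  have hc2 : (c : ℂ) ^ 2 = (s : ℂ) * (d : ℂ) := by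
    linear_combination ((c : ℂ) - η - (starRingEnd ℂ) η) * hc + hsum
      + (2 - (s : ℂ)) * hηγ - (s : ℂ) * hd
  have hcq : c ^ 2 = s * d := by exact_mod_cast hc2
  have hdγ : (d : ℝ) = γ ^ 2 := by
    have : (d : ℂ) = ((γ ^ 2 : ℝ) : ℂ) := by rw [hd, hηγ]; push_cast; ring
    exact_mod_cast this
  have hcr : (c : ℝ) ^ 2 = (s : ℝ) * γ ^ 2 := by
    have : ((c ^ 2 : ℚ) : ℝ) = ((s * d : ℚ) : ℝ) := by exact_mod_cast hcq
    push_cast at this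
    rw [this, hdγ]
  have hsR : (0 : ℝ) < (s : ℝ) := by exact_mod_cast hs
  have hsqrt : Real.sqrt (s : ℝ) * Real.sqrt (s : ℝ) = (s : ℝ) :=
    Real.mul_self_sqrt hsR.le
  constructor
  · refine ⟨|c| / s, ?_⟩
    have habs : |(c : ℝ)| = Real.sqrt (s : ℝ) * γ := by
      rw [← Real.sqrt_sq_eq_abs, hcr, Real.sqrt_mul hsR.le, Real.sqrt_sq hγpos.le]
    push_cast
    rw [div_eq_div_iff (Real.sqrt_pos.mpr hsR).ne' hsR.ne', habs]
    nlinarith [hsqrt]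
  · refine ⟨c / s, ?_⟩
    have hmap : P.map (algebraMap ℚ ℂ) = X ^ 2 + C (c : ℂ) * X + C (d : ℂ) := by
      rw [hP]
      simp [Polynomial.map_add, Polynomial.map_mul, Polynomial.map_pow,
        Polynomial.map_C, Polynomial.map_X, eq_ratCast]
    have hsC : (s : ℂ) ≠ 0 := by exact_mod_cast hs.ne'
    have h1 : (c : ℂ) = (s : ℂ) * ((c / s : ℚ) : ℂ) := by
      push_cast; field_simp
    have h2 : (d : ℂ) = (s : ℂ) * ((c / s : ℚ) : ℂ) ^ 2 := by
      push_cast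
      field_simp
      linear_combination -hc2
    rw [hmap, h1, h2]

/-- Take `r = 2` in the setup: `m ≥ 0`, `u ≥ 1`, `v` integers with
`gcd(u,v) = gcd(2,u) = gcd(2,v) = 1`, `γ` a positive irrational real with `γ² ∈ ℚ`,
and `η := γ · exp(2π√−1·v/(2^m·u))`.  Assume the minimal polynomial `P` of `η` over
`ℚ` has degree at most `2`.  If `(u,m) = (1,3)`, then `γ/√2 ∈ ℚ` and
`P = X² + 2bX + 2b²` for some `b ∈ ℚ`; if `(u,m) = (3,2)`, then `γ/√3 ∈ ℚ` and
`P = X² + 3bX + 3b²` for some `b ∈ ℚ`. -/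
theorem stmt_4 (m : ℕ) (u v : ℤ) (hu : 1 ≤ u)
    (huv : Int.gcd u v = 1) (h2u : Int.gcd 2 u = 1) (h2v : Int.gcd 2 v = 1)
    (γ : ℝ) (hγpos : 0 < γ) (hγirr : Irrational γ) (hγr : ∃ q : ℚ, γ ^ 2 = (q : ℝ))
    (η : ℂ)
    (hη : η = (γ : ℂ) *
      Complex.exp (2 * (Real.pi : ℂ) * Complex.I * (v : ℂ) / ((2 : ℂ) ^ m * (u : ℂ))))
    (hdeg : (minpoly ℚ η).natDegree ≤ 2) :
    ((u = 1 ∧ m = 3) →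
      (∃ q : ℚ, γ / Real.sqrt 2 = (q : ℝ)) ∧
      ∃ b : ℚ, (minpoly ℚ η).map (algebraMap ℚ ℂ) =
        X ^ 2 + Polynomial.C (2 * (b : ℂ)) * X + Polynomial.C (2 * (b : ℂ) ^ 2)) ∧
    ((u = 3 ∧ m = 2) →
      (∃ q : ℚ, γ / Real.sqrt 3 = (q : ℝ)) ∧
      ∃ b : ℚ, (minpoly ℚ η).map (algebraMap ℚ ℂ) =
        X ^ 2 + Polynomial.C (3 * (b : ℂ)) * X + Polynomial.C (3 * (b : ℂ) ^ 2)) := by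
  obtain ⟨qγ, hqγ⟩ := hγr
  have hγC : (γ : ℂ) ≠ 0 := by exact_mod_cast hγpos.ne'
  -- v is odd
  have hvodd : Odd v := by
    rcases Int.even_or_odd v with he | ho
    · exfalso
      have hco : IsCoprime (2 : ℤ) v := Int.isCoprime_iff_gcd_eq_one.mpr h2v
      have : IsUnit (2 : ℤ) := hco.isUnit_of_dvd' dvd_rfl he.two_dvd
      rcases Int.isUnit_iff.mp this with h | h <;> norm_num at h
    · exact ho
  constructor
  · rintro ⟨rfl, rfl⟩
    set w : ℂ := 2 * (Real.pi : ℂ) * Complex.I * (v : ℂ) / ((2 : ℂ) ^ 3 * ((1 : ℤ) : ℂ))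
      with hwdef
    set E : ℂ := Complex.exp w with hEdef
    have hE0 : E ≠ 0 := Complex.exp_ne_zero w
    have h4w : (4 : ℂ) * w = (v : ℂ) * ((Real.pi : ℂ) * Complex.I) := by
      rw [hwdef]; push_cast; ring
    have hE4 : E ^ 4 = -1 := by
      rw [hEdef, ← Complex.exp_nat_mul]
      push_cast
      rw [h4w, Complex.exp_int_mul, Complex.exp_pi_mul_I, hvodd.neg_one_zpow]
    have hcw : (starRingEnd ℂ) w = -w := by
      rw [hwdef]
      simp only [map_div₀, map_mul, map_pow, map_ofNat, map_intCast, Complex.conj_I,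
        Complex.conj_ofReal]
      ring
    have hconjE : (starRingEnd ℂ) E = E⁻¹ := by
      rw [hEdef, ← Complex.exp_conj, hcw, Complex.exp_neg]
    have hηE : η = (γ : ℂ) * E := hη
    have hconjη : (starRingEnd ℂ) η = (γ : ℂ) * E⁻¹ := by
      rw [hηE, map_mul, Complex.conj_ofReal, hconjE]
    have hηγ : η * (starRingEnd ℂ) η = (γ : ℂ) ^ 2 := by
      rw [hconjη, hηE]; field_simp
    have hinv2 : (E ^ 2)⁻¹ = -(E ^ 2) := by
      have h : E ^ 2 * -(E ^ 2) = 1 := by linear_combination -hE4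
      field_simp
      linear_combination hE4
    have hsum : η ^ 2 + ((starRingEnd ℂ) η) ^ 2 = 0 := by
      rw [hconjη, hηE]
      have : (E⁻¹) ^ 2 = (E ^ 2)⁻¹ := by rw [inv_pow]
      rw [mul_pow, mul_pow, this, hinv2]
      ring
    have hne : (starRingEnd ℂ) η ≠ η := by
      intro h
      have h2 : η ^ 2 = 0 := by
        have := hsum
        rw [h] at this
        linear_combination this / 2
      have : η = 0 := by
        exact pow_eq_zero_iff (by norm_num) |>.mp h2
      rw [hηE] at this
      exact (mul_ne_zero hγC hE0) this
    have hint : IsIntegral ℚ η := by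
      refine IsAlgebraic.isIntegral ⟨X ^ 8 - C (qγ ^ 4), X_pow_sub_C_ne_zero (by norm_num) _, ?_⟩
      have hE8 : E ^ 8 = 1 := by
        have : E ^ 8 = (E ^ 4) ^ 2 := by ring
        rw [this, hE4]; norm_num
      have hγ8 : (γ : ℂ) ^ 8 = ((qγ : ℂ)) ^ 4 := by
        have : ((γ ^ 2 : ℝ) : ℂ) = ((qγ : ℝ) : ℂ) := by rw [hqγ]
        push_cast at this
        calc (γ : ℂ) ^ 8 = ((γ : ℂ) ^ 2) ^ 4 := by ring
          _ = ((qγ : ℂ)) ^ 4 := by rw [this]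
      simp only [map_sub, map_pow, aeval_X, aeval_C, eq_ratCast]
      rw [hηE, mul_pow, hE8, mul_one, hγ8, sub_self]
    obtain ⟨h1, b, hb⟩ := core γ hγpos η 2 (by norm_num) hηγ
      (by rw [hsum]; push_cast; ring) hne hint hdeg
    constructor
    · obtain ⟨q, hq⟩ := h1
      exact ⟨q, by simpa using hq⟩
    · exact ⟨b, by simpa using hb⟩
  · rintro ⟨rfl, rfl⟩
    set w : ℂ := 2 * (Real.pi : ℂ) * Complex.I * (v : ℂ) / ((2 : ℂ) ^ 2 * ((3 : ℤ) : ℂ))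
      with hwdef
    set E : ℂ := Complex.exp w with hEdef
    have hE0 : E ≠ 0 := Complex.exp_ne_zero w
    set ζ : ℂ := E ^ 2 with hζdef
    have h6w : (6 : ℂ) * w = (v : ℂ) * ((Real.pi : ℂ) * Complex.I) := by
      rw [hwdef]; push_cast; ring
    have hz3 : ζ ^ 3 = -1 := by
      rw [hζdef, ← pow_mul, hEdef, ← Complex.exp_nat_mul]
      push_cast
      rw [h6w, Complex.exp_int_mul, Complex.exp_pi_mul_I, hvodd.neg_one_zpow]
    have hz0 : ζ ≠ 0 := by
      intro h
      rw [h] at hz3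
      norm_num at hz3
    have hzne : ζ ≠ -1 := by
      intro h
      have hexp1 : Complex.exp (2 * w + (Real.pi : ℂ) * Complex.I) = 1 := by
        rw [Complex.exp_add, Complex.exp_pi_mul_I]
        have h2w : Complex.exp (2 * w) = ζ := by
          rw [hζdef, hEdef, ← Complex.exp_nat_mul]; push_cast; ring_nf
        rw [h2w, h]
        norm_num
      obtain ⟨n, hn⟩ := Complex.exp_eq_one_iff.mp hexp1
      rw [hwdef] at hn
      have hπI : (Real.pi : ℂ) * Complex.I ≠ 0 :=
        mul_ne_zero (by exact_mod_cast Real.pi_ne_zero) Complex.I_ne_zero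
      have key : (Real.pi : ℂ) * Complex.I * ((v : ℂ) + 3 - 6 * (n : ℂ)) = 0 := by
        push_cast at hn ⊢
        linear_combination 3 * hn
      have hv3 : (v : ℂ) = 6 * (n : ℂ) - 3 := by
        rcases mul_eq_zero.mp key with h' | h'
        · exact absurd h' hπI
        · linear_combination h'
      have hvz : v = 6 * n - 3 := by exact_mod_cast hv3
      have hdvd : (3 : ℤ) ∣ v := ⟨2 * n - 1, by omega⟩
      have hco : IsCoprime (3 : ℤ) v := Int.isCoprime_iff_gcd_eq_one.mpr huv
      have : IsUnit (3 : ℤ) := hco.isUnit_of_dvd' dvd_rfl hdvd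
      rcases Int.isUnit_iff.mp this with h' | h' <;> norm_num at h'
    have hz2 : ζ ^ 2 - ζ + 1 = 0 := by
      have h : (ζ + 1) * (ζ ^ 2 - ζ + 1) = 0 := by linear_combination hz3
      rcases mul_eq_zero.mp h with h' | h'
      · exact absurd (by linear_combination h') hzne
      · exact h'
    have hzinv : ζ⁻¹ = 1 - ζ := by
      field_simp
      linear_combination hz2
    have hcw : (starRingEnd ℂ) w = -w := by
      rw [hwdef]
      simp only [map_div₀, map_mul, map_pow, map_ofNat, map_intCast, Complex.conj_I,
        Complex.conj_ofReal]
      ring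
    have hconjE : (starRingEnd ℂ) E = E⁻¹ := by
      rw [hEdef, ← Complex.exp_conj, hcw, Complex.exp_neg]
    have hηE : η = (γ : ℂ) * E := hη
    have hconjη : (starRingEnd ℂ) η = (γ : ℂ) * E⁻¹ := by
      rw [hηE, map_mul, Complex.conj_ofReal, hconjE]
    have hηγ : η * (starRingEnd ℂ) η = (γ : ℂ) ^ 2 := by
      rw [hconjη, hηE]; field_simp
    have hη2 : η ^ 2 = (γ : ℂ) ^ 2 * ζ := by
      rw [hηE, hζdef]; ring
    have hconjη2 : ((starRingEnd ℂ) η) ^ 2 = (γ : ℂ) ^ 2 * ζ⁻¹ := by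
      rw [hconjη, hζdef, mul_pow, inv_pow]
    have hsum : η ^ 2 + ((starRingEnd ℂ) η) ^ 2 = (γ : ℂ) ^ 2 := by
      rw [hη2, hconjη2, hzinv]; ring
    have hne : (starRingEnd ℂ) η ≠ η := by
      intro h
      have hζeq : (γ : ℂ) ^ 2 * ζ⁻¹ = (γ : ℂ) ^ 2 * ζ := by
        rw [← hη2, ← hconjη2, h]
      have hζζ : ζ⁻¹ = ζ := mul_left_cancel₀ (pow_ne_zero 2 hγC) hζeq
      have h2ζ : 2 * ζ - 1 = 0 := by
        rw [hzinv] at hζζ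
        linear_combination -hζζ
      have : (3 / 4 : ℂ) = 0 := by
        linear_combination hz2 - ((2 * ζ - 1) / 4) * h2ζ
      norm_num at this
    have hint : IsIntegral ℚ η := by
      refine IsAlgebraic.isIntegral ⟨X ^ 12 - C (qγ ^ 6), X_pow_sub_C_ne_zero (by norm_num) _, ?_⟩
      have hE12 : E ^ 12 = 1 := by
        have : E ^ 12 = (ζ ^ 3) ^ 2 := by rw [hζdef]; ring
        rw [this, hz3]; norm_num
      have hγ12 : (γ : ℂ) ^ 12 = ((qγ : ℂ)) ^ 6 := by
        have : ((γ ^ 2 : ℝ) : ℂ) = ((qγ : ℝ) : ℂ) := by rw [hqγ]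
        push_cast at this
        calc (γ : ℂ) ^ 12 = ((γ : ℂ) ^ 2) ^ 6 := by ring
          _ = ((qγ : ℂ)) ^ 6 := by rw [this]
      simp only [map_sub, map_pow, aeval_X, aeval_C, eq_ratCast]
      rw [hηE, mul_pow, hE12, mul_one, hγ12, sub_self]
    obtain ⟨h1, b, hb⟩ := core γ hγpos η 3 (by norm_num) hηγ
      (by rw [hsum]; push_cast; ring) hne hint hdeg
    constructor
    · obtain ⟨q, hq⟩ := h1
      exact ⟨q, by simpa using hq⟩
    · exact ⟨b, by simpa using hb⟩
end

section
/- Let r be an odd prime, let c_1,…,c_r be rational numbers, and let γ be a positive real number with γ^r ∈ ℚ. If all coefficients of the polynomial ∏_{i=1}^r (X − γ·exp(2π√−1·c_i)) are rational, then all coefficients of ∏_{i=1}^r (X − exp(2π√−1·c_i)) are rational. -/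
open Polynomial IntermediateField

private lemma exp_mem (m : ℕ) (hm0 : m ≠ 0) (cq : ℚ) (hden : cq.den ∣ m) :
    Complex.exp (2 * (Real.pi : ℂ) * Complex.I * (cq : ℂ)) ∈
      ℚ⟮Complex.exp (2 * Real.pi * Complex.I / m)⟯ := by
  obtain ⟨t, ht⟩ := hden
  have hQ : ((cq.num * (t : ℤ) : ℤ) : ℚ) = cq * m := by
    rw [ht]
    push_cast
    rw [← mul_assoc, Rat.mul_den_eq_num]
  have haC : ((cq.num * (t : ℤ) : ℤ) : ℂ) = (cq : ℂ) * m := by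
    exact_mod_cast congrArg (fun x : ℚ => (x : ℂ)) hQ
  have hmC : (m : ℂ) ≠ 0 := Nat.cast_ne_zero.mpr hm0
  have hval : Complex.exp (2 * (Real.pi : ℂ) * Complex.I * (cq : ℂ))
      = Complex.exp (2 * Real.pi * Complex.I / m) ^ (cq.num * (t : ℤ)) := by
    rw [← Complex.exp_int_mul]
    congr 1
    rw [haC]
    field_simp
  rw [hval]
  exact zpow_mem (mem_adjoin_simple_self ℚ _) _

private lemma key_aux (M : ℕ+) (L : IntermediateField ℚ ℂ)
    [IsCyclotomicExtension {(M : ℕ)} ℚ L]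
    (r k : ℕ) (hodd : Odd r) (γ : ℝ) (hγpos : 0 < γ) (q : ℚ) (hq : γ ^ r = (q : ℝ))
    (x : L) (p : ℚ) (hpx : ((γ : ℝ) : ℂ) ^ k * (x : ℂ) = (p : ℂ)) :
    ∃ s : ℚ, (s : ℂ) = (x : ℂ) := by
  haveI := IsCyclotomicExtension.finiteDimensional {(M : ℕ)} ℚ L
  haveI := IsCyclotomicExtension.isGalois {(M : ℕ)} ℚ L
  have hcomm : ∀ σ τ : (L ≃ₐ[ℚ] L), σ * τ = τ * σ := fun σ τ =>
    (IsCyclotomicExtension.isMulCommutative {(M : ℕ)} ℚ L).is_comm.comm σ τ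
  let conjA : ℂ ≃ₐ[ℚ] ℂ := Complex.conjAe.restrictScalars ℚ
  let conjL : L ≃ₐ[ℚ] L := conjA.restrictNormal L
  have hconjL : ∀ y : L, ((conjL y : ℂ)) = (starRingEnd ℂ) (y : ℂ) := fun y =>
    AlgEquiv.restrictNormal_commutes conjA L y
  have hγ'0 : ((γ : ℝ) : ℂ) ≠ 0 := by
    simp only [ne_eq, Complex.ofReal_eq_zero]; exact ne_of_gt hγpos
  by_cases hx0 : x = 0
  · exact ⟨0, by simp [hx0]⟩
  have hxC : (x : ℂ) ≠ 0 := fun h => hx0 (by exact_mod_cast (ZeroMemClass.coe_eq_zero).mp h)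
  set xθ : L := algebraMap ℚ L p * x⁻¹ with hxθdef
  have hcoe_alg : ∀ s : ℚ, ((algebraMap ℚ L s : L) : ℂ) = (s : ℂ) := by
    intro s
    have h1 : ((algebraMap ℚ L s : L) : ℂ) = algebraMap ℚ ℂ s :=
      (IsScalarTower.algebraMap_apply ℚ L ℂ s).symm
    rw [h1, eq_ratCast]
  have hinv : ((x⁻¹ : L) : ℂ) = ((x : ℂ))⁻¹ := map_inv₀ (algebraMap L ℂ) x
  have hxθ : (xθ : ℂ) = ((γ : ℝ) : ℂ) ^ k := by
    have h0 : (xθ : ℂ) = ((algebraMap ℚ L p : L) : ℂ) * ((x⁻¹ : L) : ℂ) := rfl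
    rw [h0, hcoe_alg, hinv, ← hpx]
    field_simp
  have hγr' : ((γ : ℝ) : ℂ) ^ r = ((q : ℚ) : ℂ) := by
    rw [← Complex.ofReal_pow, hq]
    norm_cast
  have hθr : xθ ^ r = algebraMap ℚ L (q ^ k) := by
    apply Subtype.ext
    have h0 : ((xθ ^ r : L) : ℂ) = ((xθ : L) : ℂ) ^ r := map_pow (algebraMap L ℂ) xθ r
    rw [h0, hcoe_alg, hxθ]
    rw [← pow_mul, mul_comm k r, pow_mul, hγr']
    push_cast
    ring
  have hγkreal : (xθ : ℂ) = ((γ ^ k : ℝ) : ℂ) := by rw [hxθ]; push_cast; ring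
  have hfixed : ∀ σ : L ≃ₐ[ℚ] L, σ xθ = xθ := by
    intro σ
    have hconj_fix : conjL xθ = xθ := by
      apply Subtype.ext
      rw [hconjL, hγkreal, Complex.conj_ofReal]
    have hreal : (starRingEnd ℂ) ((σ xθ : L) : ℂ) = ((σ xθ : L) : ℂ) := by
      calc (starRingEnd ℂ) ((σ xθ : L) : ℂ) = ((conjL (σ xθ) : L) : ℂ) := (hconjL _).symm
        _ = (((conjL * σ) xθ : L) : ℂ) := by rw [AlgEquiv.mul_apply]
        _ = (((σ * conjL) xθ : L) : ℂ) := by rw [hcomm]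
        _ = ((σ (conjL xθ) : L) : ℂ) := by rw [AlgEquiv.mul_apply]
        _ = ((σ xθ : L) : ℂ) := by rw [hconj_fix]
    have hpow : ((σ xθ : L) : ℂ) ^ r = ((γ ^ k : ℝ) : ℂ) ^ r := by
      have h2 : σ (xθ ^ r) = xθ ^ r := by rw [hθr]; exact σ.commutes _
      calc ((σ xθ : L) : ℂ) ^ r = ((σ xθ ^ r : L) : ℂ) :=
            (map_pow (algebraMap L ℂ) (σ xθ) r).symm
        _ = ((σ (xθ ^ r) : L) : ℂ) := by rw [map_pow]
        _ = ((xθ ^ r : L) : ℂ) := by rw [h2]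
        _ = (xθ : ℂ) ^ r := map_pow (algebraMap L ℂ) xθ r
        _ = ((γ ^ k : ℝ) : ℂ) ^ r := by rw [hγkreal]
    obtain ⟨tre, htre⟩ : ∃ tr : ℝ, ((σ xθ : L) : ℂ) = (tr : ℂ) :=
      ⟨((σ xθ : L) : ℂ).re, (Complex.conj_eq_iff_re.mp hreal).symm⟩
    have htr : tre ^ r = (γ ^ k) ^ r := by
      have h3 := hpow
      rw [htre, ← Complex.ofReal_pow, ← Complex.ofReal_pow] at h3
      exact_mod_cast h3
    have h4 : tre = γ ^ k := (hodd.strictMono_pow (R := ℝ)).injective htr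
    apply Subtype.ext
    rw [htre, h4, hγkreal]
  obtain ⟨s, hs⟩ : ∃ s : ℚ, algebraMap ℚ L s = xθ := by
    have hb : xθ ∈ (⊥ : IntermediateField ℚ L) := by
      rw [← IsGalois.fixedField_fixingSubgroup (⊥ : IntermediateField ℚ L)]
      intro g
      exact hfixed g
    rwa [IntermediateField.mem_bot] at hb
  have hsC : (s : ℂ) = ((γ : ℝ) : ℂ) ^ k := by rw [← hxθ, ← hs, hcoe_alg]
  have hs0 : (s : ℂ) ≠ 0 := by rw [hsC]; exact pow_ne_zero _ hγ'0
  refine ⟨p / s, ?_⟩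
  push_cast
  rw [← hpx, hsC]
  exact mul_div_cancel_left₀ _ (pow_ne_zero _ hγ'0)

private lemma esymm_mul_map (a : ℂ) (m : Multiset ℂ) (n : ℕ) :
    (m.map (fun z => a * z)).esymm n = a ^ n * m.esymm n := by
  have := Multiset.pow_smul_esymm a n m
  simpa [smul_eq_mul] using this.symm

set_option maxHeartbeats 1000000 in
/-- Let `r` be an odd prime, `c₁,…,c_r ∈ ℚ`, and `γ > 0` a real with
`γ^r ∈ ℚ`.  If all coefficients of `∏ᵢ (X − γ·exp(2π√−1·cᵢ))` are rational, then all
coefficients of `∏ᵢ (X − exp(2π√−1·cᵢ))` are rational. -/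
theorem stmt_5 (r : ℕ) (hrp : r.Prime) (hodd : Odd r)
    (c : Fin r → ℚ) (γ : ℝ) (hγpos : 0 < γ) (hγr : ∃ q : ℚ, γ ^ r = (q : ℝ))
    (hrat : ∀ n : ℕ,
      ((∏ i : Fin r, (X - Polynomial.C ((γ : ℂ) *
        Complex.exp (2 * (Real.pi : ℂ) * Complex.I * ((c i : ℚ) : ℂ))))).coeff n)
        ∈ Set.range ((↑) : ℚ → ℂ)) :
    ∀ n : ℕ,
      ((∏ i : Fin r, (X - Polynomial.C
        (Complex.exp (2 * (Real.pi : ℂ) * Complex.I * ((c i : ℚ) : ℂ))))).coeff n)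
        ∈ Set.range ((↑) : ℚ → ℂ) := by
  obtain ⟨q, hq⟩ := hγr
  have hγ'0 : ((γ : ℝ) : ℂ) ≠ 0 := by
    simp only [ne_eq, Complex.ofReal_eq_zero]; exact ne_of_gt hγpos
  set efun : Fin r → ℂ :=
    fun i => Complex.exp (2 * (Real.pi : ℂ) * Complex.I * ((c i : ℚ) : ℂ)) with hefun
  -- the cyclotomic setting
  set m : ℕ := ∏ i, (c i).den with hm
  have hm0 : m ≠ 0 := by
    rw [hm]
    exact Finset.prod_ne_zero_iff.mpr fun i _ => (c i).den_nz
  set ζ : ℂ := Complex.exp (2 * Real.pi * Complex.I / m) with hζdef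
  have hζ : IsPrimitiveRoot ζ m := Complex.isPrimitiveRoot_exp m hm0
  set M : ℕ+ := ⟨m, Nat.pos_of_ne_zero hm0⟩ with hM
  have hζM : IsPrimitiveRoot ζ (M : ℕ) := hζ
  set L : IntermediateField ℚ ℂ := ℚ⟮ζ⟯ with hL
  have hint : IsIntegral ℚ ζ :=
    ⟨X ^ m - 1, monic_X_pow_sub_C 1 hm0, by simp [hζ.pow_eq_one]⟩
  have H := IntermediateField.adjoin_simple_toSubalgebra_of_isAlgebraic hint.isAlgebraic
  haveI hcyc : IsCyclotomicExtension {(M : ℕ)} ℚ L := by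
    refine IsCyclotomicExtension.equiv {(M : ℕ)} ℚ _ (h := ?_)
      (.refl : (↥L.toSubalgebra) ≃ₐ[ℚ] ↥L)
    rw [H]
    exact hζM.adjoin_isCyclotomicExtension ℚ
  -- each exp value lies in L
  have hmem : ∀ i, efun i ∈ L :=
    fun i => exp_mem m hm0 (c i) (Finset.dvd_prod_of_mem _ (Finset.mem_univ i))
  set ζL : Fin r → L := fun i => ⟨efun i, hmem i⟩ with hζL
  set QL : L[X] := ∏ i : Fin r, (X - C (ζL i)) with hQL
  have hQmap : (∏ i : Fin r, (X - C (efun i))) = QL.map (algebraMap L ℂ) := by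
    rw [hQL, Polynomial.map_prod]
    refine Finset.prod_congr rfl fun i _ => ?_
    rw [Polynomial.map_sub, Polynomial.map_X, Polynomial.map_C]
    rfl
  -- the coefficient relations for n ≤ r
  set ms : Multiset ℂ := Finset.univ.val.map efun with hms
  have hcard : Multiset.card ms = r := by simp [hms]
  have hQc : ∀ n : ℕ, n ≤ r →
      (∏ i : Fin r, (X - C (efun i))).coeff n = (-1) ^ (r - n) * ms.esymm (r - n) := by
    intro n hn
    have h1 : (∏ i : Fin r, (X - C (efun i))) = (ms.map fun t => X - C t).prod := by
      rw [hms, Multiset.map_map]; rfl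
    rw [h1]
    have := Multiset.prod_X_sub_C_coeff ms (k := n) (by rw [hcard]; exact hn)
    rwa [hcard] at this
  have hPc : ∀ n : ℕ, n ≤ r →
      (∏ i : Fin r, (X - C (((γ : ℝ) : ℂ) * efun i))).coeff n
        = ((γ : ℝ) : ℂ) ^ (r - n) * ((-1) ^ (r - n) * ms.esymm (r - n)) := by
    intro n hn
    have h1 : (∏ i : Fin r, (X - C (((γ : ℝ) : ℂ) * efun i)))
        = ((ms.map fun z => ((γ : ℝ) : ℂ) * z).map fun t => X - C t).prod := by
      rw [hms, Multiset.map_map, Multiset.map_map]; rfl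
    rw [h1]
    have hcard2 : Multiset.card (ms.map fun z => ((γ : ℝ) : ℂ) * z) = r := by
      rw [Multiset.card_map, hcard]
    have := Multiset.prod_X_sub_C_coeff (ms.map fun z => ((γ : ℝ) : ℂ) * z) (k := n)
      (by rw [hcard2]; exact hn)
    rw [hcard2] at this
    rw [this, esymm_mul_map]
    ring
  -- finish
  intro n
  rcases le_or_gt n r with hn | hn
  · obtain ⟨p, hp⟩ := hrat n
    rw [hPc n hn] at hp
    have hx : (-1 : ℂ) ^ (r - n) * ms.esymm (r - n) = ((QL.coeff n : L) : ℂ) := by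
      rw [← hQc n hn, hQmap, Polynomial.coeff_map]
      rfl
    rw [hx] at hp
    obtain ⟨s, hs⟩ := key_aux M L r (r - n) hodd γ hγpos q hq (QL.coeff n) p hp.symm
    rw [hQc n hn, hx]
    exact ⟨s, hs⟩
  · refine ⟨0, ?_⟩
    rw [Rat.cast_zero]
    symm
    apply Polynomial.coeff_eq_zero_of_natDegree_lt
    have hdeg : (∏ i : Fin r, (X - C (efun i))).natDegree = r := by
      rw [Polynomial.natDegree_prod _ _ fun i _ => X_sub_C_ne_zero (efun i)]
      simp [Polynomial.natDegree_X_sub_C]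
    rw [hdeg]
    exact hn
end

section
/- Let r_0 and j_0 be positive integers and r_1 := r_0·j_0. Let S_0 be a set of complex r_0-th roots of unity with a function f_0 : S_0 → ℤ_{>0}. Let S_1 := { z ∈ ℂ : z^{r_1} = 1 and z^{j_0} ∈ S_0 } and f_1(z) := f_0(z^{j_0}). Let γ_1 ∈ ℂ∖{0} and γ_0 := γ_1^{j_0}. Define P_i(X) := ∏_{b ∈ S_i} (X − γ_i·b)^{f_i(b)} for i = 0, 1. Then P_0 has all coefficients in ℚ if and only if P_1 has all coefficients in ℚ. -/
open Polynomial

lemma prod_nthRoots_toFinset (n : ℕ) (hn : 0 < n) (c : ℂ) (hc : c ≠ 0) :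
    ∏ b ∈ (nthRoots n c).toFinset, (X - C b) = X ^ n - C c := by
  have hsep : (X ^ n - C c : ℂ[X]).Separable :=
    separable_X_pow_sub_C c (by exact_mod_cast Nat.cast_ne_zero.mpr hn.ne') hc
  have hnd : (nthRoots n c).Nodup := Polynomial.nodup_roots hsep
  have hcard : Multiset.card (nthRoots n c) = n := by
    obtain ⟨α, hα⟩ := Complex.isAlgClosed.exists_pow_nat_eq c hn
    rw [(Complex.isPrimitiveRoot_exp n hn.ne').card_nthRoots, if_pos ⟨α, hα⟩]
  have hmonic : (X ^ n - C c : ℂ[X]).Monic := monic_X_pow_sub_C c hn.ne'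
  have hdeg : ((X ^ n - C c : ℂ[X])).natDegree = n := natDegree_X_pow_sub_C
  have := prod_multiset_X_sub_C_of_monic_of_roots_card_eq hmonic (by
    rw [hdeg]; exact hcard)
  rw [← this]
  show _ = ((X ^ n - C c : ℂ[X]).roots.map fun a => X - C a).prod
  rw [Finset.prod_eq_multiset_prod]
  congr 1
  rw [show (X ^ n - C c : ℂ[X]).roots = nthRoots n c from rfl]
  rw [Multiset.toFinset_val, Multiset.dedup_eq_self.mpr hnd]

/-- Let `r₀, j₀ ≥ 1`, `r₁ := r₀·j₀`.  Let `S₀` be a set of complex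
`r₀`-th roots of unity with a positive-integer-valued function `f₀` on it, let
`S₁ := { z : z^{r₁} = 1 ∧ z^{j₀} ∈ S₀ }` with `f₁(z) := f₀(z^{j₀})`, let `γ₁ ≠ 0`
and `γ₀ := γ₁^{j₀}`.  Put `Pᵢ(X) := ∏_{b ∈ Sᵢ} (X − γᵢ·b)^{fᵢ(b)}`.  Then `P₀` has
all coefficients in `ℚ` iff `P₁` does. -/
theorem stmt_7 (r₀ j₀ : ℕ) (hr₀ : 0 < r₀) (hj₀ : 0 < j₀)
    (S₀ : Finset ℂ) (hS₀ : ∀ z ∈ S₀, z ^ r₀ = 1)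
    (f₀ : ℂ → ℕ) (hf₀ : ∀ z ∈ S₀, 0 < f₀ z)
    (S₁ : Finset ℂ) (hS₁ : ∀ z : ℂ, z ∈ S₁ ↔ z ^ (r₀ * j₀) = 1 ∧ z ^ j₀ ∈ S₀)
    (γ₁ : ℂ) (hγ₁ : γ₁ ≠ 0) :
    (∀ n : ℕ, ((∏ b ∈ S₀, (X - Polynomial.C (γ₁ ^ j₀ * b)) ^ f₀ b).coeff n)
        ∈ Set.range ((↑) : ℚ → ℂ)) ↔
    (∀ n : ℕ, ((∏ b ∈ S₁, (X - Polynomial.C (γ₁ * b)) ^ f₀ (b ^ j₀)).coeff n)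
        ∈ Set.range ((↑) : ℚ → ℂ)) := by
  classical
  set P₀ : ℂ[X] := ∏ b ∈ S₀, (X - Polynomial.C (γ₁ ^ j₀ * b)) ^ f₀ b with hP₀
  -- maps-to fact
  have hmap : ∀ b ∈ S₁, b ^ j₀ ∈ S₀ := fun b hb => ((hS₁ b).1 hb).2
  have key : (∏ b ∈ S₁, (X - Polynomial.C (γ₁ * b)) ^ f₀ (b ^ j₀))
      = expand ℂ j₀ P₀ := by
    rw [← Finset.prod_fiberwise_of_maps_to hmap
      (fun b => (X - Polynomial.C (γ₁ * b)) ^ f₀ (b ^ j₀))]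
    rw [hP₀, map_prod]
    refine Finset.prod_congr rfl fun a ha => ?_
    have ha0 : a ≠ 0 := by
      intro h
      have h1 := hS₀ a ha
      rw [h, zero_pow hr₀.ne'] at h1
      exact zero_ne_one h1
    have hexp : expand ℂ j₀ ((X - Polynomial.C (γ₁ ^ j₀ * a)) ^ f₀ a)
        = (X ^ j₀ - C (γ₁ ^ j₀ * a)) ^ f₀ a := by
      rw [map_pow, map_sub, expand_X, expand_C]
    rw [hexp]
    have hfib : ∀ b, b ∈ S₁.filter (fun b => b ^ j₀ = a) ↔ (γ₁ * b) ^ j₀ = γ₁ ^ j₀ * a := by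
      intro b
      simp only [Finset.mem_filter, hS₁, mul_pow]
      constructor
      · rintro ⟨⟨-, -⟩, rfl⟩; rfl
      · intro h
        have hb : b ^ j₀ = a := by
          have := mul_left_cancel₀ (pow_ne_zero j₀ hγ₁) h
          exact this
        refine ⟨⟨?_, hb ▸ ha⟩, hb⟩
        rw [mul_comm r₀ j₀, pow_mul, hb, hS₀ a ha]
    have hc0 : γ₁ ^ j₀ * a ≠ 0 := mul_ne_zero (pow_ne_zero _ hγ₁) ha0
    have := prod_nthRoots_toFinset j₀ hj₀ (γ₁ ^ j₀ * a) hc0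
    rw [← this]
    rw [← Finset.prod_pow]
    refine Finset.prod_nbij (fun b => γ₁ * b) ?_ ?_ ?_ ?_
    · intro b hb
      rw [Multiset.mem_toFinset, mem_nthRoots hj₀]
      exact (hfib b).1 hb
    · intro x hx y hy hxy
      exact mul_left_cancel₀ hγ₁ hxy
    · intro z hz
      simp only [Finset.mem_coe, Multiset.mem_toFinset, mem_nthRoots hj₀] at hz
      refine ⟨γ₁⁻¹ * z, ?_, by field_simp⟩
      rw [Finset.mem_coe, hfib]
      rw [show γ₁ * (γ₁⁻¹ * z) = z by field_simp]
      exact hz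
    · intro b hb
      have hbj : b ^ j₀ = a := (Finset.mem_filter.mp hb).2
      rw [hbj]
  rw [key]
  constructor
  · intro h n
    rw [coeff_expand hj₀]
    split_ifs with hd
    · exact h _
    · exact ⟨0, by simp⟩
  · intro h n
    have := h (n * j₀)
    rwa [coeff_expand_mul hj₀] at this
end

section
/- Let r_0 and j_0 be positive integers and r := r_0·j_0. Let a = (a_1,…,a_r) ∈ ℝ^r satisfy a_{i+r_0} = a_i − r_0 for all 1 ≤ i ≤ r − r_0. Then the following are equivalent: (i) there exists γ ∈ ℂ∖{0} with γ^r ∈ ℚ such that ∏_{i=1}^r (X − γ·exp(2π√−1·a_i/r)) has all coefficients in ℚ; (ii) there exists γ_0 ∈ ℂ∖{0} with γ_0^{r_0} ∈ ℚ such that ∏_{i=1}^{r_0} (X − γ_0·exp(2π√−1·a_i/r_0)) has all coefficients in ℚ. -/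
open Polynomial

/-- Reindexing a product over `Icc 1 (r₀*m)` into blocks of size `r₀`. -/
lemma stmt8_prod_split {M : Type*} [CommMonoid M] (r₀ : ℕ) (f : ℕ → M) :
    ∀ m : ℕ, ∏ i ∈ Finset.Icc 1 (r₀ * m), f i
      = ∏ k ∈ Finset.range m, ∏ i ∈ Finset.Icc 1 r₀, f (i + r₀ * k) := by
  intro m
  induction m with
  | zero => simp
  | succ m ih =>
    have h1 : r₀ * (m + 1) = r₀ * m + r₀ := by ring
    have h2 : Finset.Icc 1 (r₀ * m) = Finset.Ioc 0 (r₀ * m) := by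
      rw [← Finset.Icc_add_one_left_eq_Ioc, zero_add]
    have h3 : Finset.Icc 1 (r₀ * m + r₀) = Finset.Ioc 0 (r₀ * m + r₀) := by
      rw [← Finset.Icc_add_one_left_eq_Ioc, zero_add]
    rw [h1, h3, ← Finset.prod_Ioc_consecutive f (Nat.zero_le (r₀ * m))
      (Nat.le_add_right _ _), ← h2, ih, Finset.prod_range_succ]
    congr 1
    have h4 : Finset.Ioc (r₀ * m) (r₀ * m + r₀)
        = (Finset.Ioc 0 r₀).map (addRightEmbedding (r₀ * m)) := by
      rw [Finset.map_add_right_Ioc, zero_add, add_comm]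
    rw [h4, Finset.prod_map,
      show Finset.Icc 1 r₀ = Finset.Ioc 0 r₀ from by rw [← Finset.Icc_add_one_left_eq_Ioc, zero_add]]
    exact Finset.prod_congr rfl fun x _ => rfl

/-- Let `r₀, j₀ ≥ 1`, `r := r₀·j₀`, and `a ∈ ℝ^r` with
`a_{i+r₀} = a_i − r₀` for `1 ≤ i ≤ r − r₀`.  Then there exists `γ ≠ 0` with
`γ^r ∈ ℚ` such that `∏_{i=1}^r (X − γ·exp(2π√−1·a_i/r))` has all coefficients in
`ℚ`, iff there exists `γ₀ ≠ 0` with `γ₀^{r₀} ∈ ℚ` such that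
`∏_{i=1}^{r₀} (X − γ₀·exp(2π√−1·a_i/r₀))` has all coefficients in `ℚ`. -/
theorem stmt_8 (r₀ j₀ : ℕ) (hr₀ : 0 < r₀) (hj₀ : 0 < j₀)
    (a : ℕ → ℝ)
    (ha : ∀ i : ℕ, 1 ≤ i → i ≤ r₀ * j₀ - r₀ → a (i + r₀) = a i - r₀) :
    (∃ γ : ℂ, γ ≠ 0 ∧ (∃ q : ℚ, γ ^ (r₀ * j₀) = (q : ℂ)) ∧
      ∀ n : ℕ, ((∏ i ∈ Finset.Icc 1 (r₀ * j₀),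
          (X - Polynomial.C (γ * Complex.exp
            (2 * (Real.pi : ℂ) * Complex.I * ((a i : ℂ) / ((r₀ * j₀ : ℕ) : ℂ)))))).coeff n)
          ∈ Set.range ((↑) : ℚ → ℂ)) ↔
    (∃ γ₀ : ℂ, γ₀ ≠ 0 ∧ (∃ q : ℚ, γ₀ ^ r₀ = (q : ℂ)) ∧
      ∀ n : ℕ, ((∏ i ∈ Finset.Icc 1 r₀,
          (X - Polynomial.C (γ₀ * Complex.exp
            (2 * (Real.pi : ℂ) * Complex.I * ((a i : ℂ) / ((r₀ : ℕ) : ℂ)))))).coeff n)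
          ∈ Set.range ((↑) : ℚ → ℂ)) := by
  have hr₀C : ((r₀ : ℂ)) ≠ 0 := Nat.cast_ne_zero.mpr hr₀.ne'
  have hj₀C : ((j₀ : ℂ)) ≠ 0 := Nat.cast_ne_zero.mpr hj₀.ne'
  -- values of `a` along the blocks
  have haux : ∀ k i : ℕ, 1 ≤ i → i ≤ r₀ → k < j₀ → a (i + r₀ * k) = a i - (r₀ * k : ℕ) := by
    intro k
    induction k with
    | zero => intro i _ _ _; simp
    | succ k ih =>
      intro i h1 h2 h3
      have hk : k < j₀ := Nat.lt_of_succ_lt h3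
      have hle : i + r₀ * k ≤ r₀ * j₀ - r₀ := by
        have h4 : k + 2 ≤ j₀ := h3
        have : i + r₀ * k + r₀ ≤ r₀ * j₀ := by nlinarith
        omega
      have h5 : i + r₀ * (k + 1) = (i + r₀ * k) + r₀ := by ring
      rw [h5, ha _ (by omega) hle, ih i h1 h2 hk]
      push_cast
      ring
  -- the key polynomial identity
  have key : ∀ γ : ℂ,
      (∏ i ∈ Finset.Icc 1 (r₀ * j₀),
          (X - Polynomial.C (γ * Complex.exp
            (2 * (Real.pi : ℂ) * Complex.I * ((a i : ℂ) / ((r₀ * j₀ : ℕ) : ℂ))))))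
      = Polynomial.expand ℂ j₀ (∏ i ∈ Finset.Icc 1 r₀,
          (X - Polynomial.C (γ ^ j₀ * Complex.exp
            (2 * (Real.pi : ℂ) * Complex.I * ((a i : ℂ) / ((r₀ : ℕ) : ℂ)))))) := by
    intro γ
    rw [stmt8_prod_split r₀ _ j₀, Finset.prod_comm, map_prod]
    refine Finset.prod_congr rfl ?_
    intro i hi
    simp only [Finset.mem_Icc] at hi
    set ζ : ℂ := (Complex.exp (2 * (Real.pi : ℂ) * Complex.I / j₀))⁻¹ with hζdef
    have hζ : IsPrimitiveRoot ζ j₀ :=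
      (Complex.isPrimitiveRoot_exp j₀ hj₀.ne').inv
    set α : ℂ := γ * Complex.exp
        (2 * (Real.pi : ℂ) * Complex.I * ((a i : ℂ) / ((r₀ * j₀ : ℕ) : ℂ))) with hαdef
    have hprod := X_pow_sub_C_eq_prod hζ hj₀ (rfl : α ^ j₀ = α ^ j₀)
    have hterm : ∀ k ∈ Finset.range j₀,
        X - Polynomial.C (γ * Complex.exp
          (2 * (Real.pi : ℂ) * Complex.I * ((a (i + r₀ * k) : ℂ) / ((r₀ * j₀ : ℕ) : ℂ))))
        = X - Polynomial.C (ζ ^ k * α) := by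
      intro k hk
      simp only [Finset.mem_range] at hk
      have hval := haux k i hi.1 hi.2 hk
      have hscal : γ * Complex.exp (2 * (Real.pi : ℂ) * Complex.I *
            ((((a i - ((r₀ * k : ℕ) : ℝ)) : ℝ) : ℂ) / ((r₀ * j₀ : ℕ) : ℂ))) = ζ ^ k * α := by
        rw [hζdef, ← Complex.exp_neg, ← Complex.exp_nat_mul, hαdef,
          mul_comm (Complex.exp ((k : ℂ) * -(2 * (Real.pi : ℂ) * Complex.I / (j₀ : ℂ)))) _,
          mul_assoc γ _ _, ← Complex.exp_add]
        congr 2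
        push_cast
        field_simp
        ring
      rw [hval, hscal]
    rw [Finset.prod_congr rfl hterm, ← hprod]
    have hα : α ^ j₀ = γ ^ j₀ * Complex.exp
        (2 * (Real.pi : ℂ) * Complex.I * ((a i : ℂ) / ((r₀ : ℕ) : ℂ))) := by
      rw [hαdef, mul_pow, ← Complex.exp_nat_mul]
      congr 2
      push_cast
      field_simp
    rw [hα, map_sub, Polynomial.expand_X, Polynomial.expand_C]
  constructor
  · rintro ⟨γ, hγ, ⟨q, hq⟩, hcoeff⟩
    refine ⟨γ ^ j₀, pow_ne_zero _ hγ, ⟨q, by rw [← pow_mul, mul_comm]; exact hq⟩, ?_⟩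
    intro n
    have := hcoeff (n * j₀)
    rwa [key γ, Polynomial.coeff_expand_mul hj₀] at this
  · rintro ⟨γ₀, hγ₀, ⟨q, hq⟩, hcoeff⟩
    set γ : ℂ := γ₀ ^ ((j₀ : ℂ)⁻¹) with hγdef
    have hγj : γ ^ j₀ = γ₀ := Complex.cpow_nat_inv_pow γ₀ hj₀.ne'
    have hγ : γ ≠ 0 := by
      intro h
      apply hγ₀
      rw [← hγj, h, zero_pow hj₀.ne']
    refine ⟨γ, hγ, ⟨q, ?_⟩, ?_⟩
    · rw [mul_comm, pow_mul, hγj]; exact hq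
    · intro n
      rw [key γ, hγj, Polynomial.coeff_expand hj₀]
      split_ifs with h
      · exact hcoeff _
      · exact ⟨0, by simp⟩
end

section
/- Let r, m be positive integers and a = (a_1,…,a_r) ∈ ℝ^r with a_1 ≥ a_2 ≥ ⋯ ≥ a_r ≥ a_1 − m. Then there exist integers k_0, ℓ with 0 ≤ k_0 ≤ r−1 satisfying condition (★)(k_0,ℓ) if and only if there exists ν ∈ ℝ with 2ν ∈ ℤ such that the polynomial ∏_{i=1}^r (X − exp(2π√−1·(a_i+ν)/m)) has all coefficients real. -/
open Polynomial

/-- periodic staircase extension of `c` restricted to `[1,r]` -/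
noncomputable def extS (r m : ℕ) (c : ℕ → ℝ) (j : ℤ) : ℝ :=
  c ((((j - 1) % (r:ℤ)).toNat) + 1) - (((j - 1) / (r:ℤ) : ℤ) : ℝ) * m

lemma extS_nat (r m : ℕ) (c : ℕ → ℝ) (i : ℕ) (h1 : 1 ≤ i) (h2 : i ≤ r) :
    extS r m c i = c i := by
  unfold extS
  have e1 : ((i:ℤ) - 1) % r = (i:ℤ) - 1 := Int.emod_eq_of_lt (by omega) (by omega)
  have e2 : ((i:ℤ) - 1) / r = 0 := Int.ediv_eq_zero_of_lt (by omega) (by omega)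
  rw [e1, e2]
  have : ((i:ℤ) - 1).toNat + 1 = i := by omega
  rw [this]
  simp

lemma extS_shift (r m : ℕ) (hr : 0 < r) (c : ℕ → ℝ) (j : ℤ) :
    extS r m c (j + r) = extS r m c j - m := by
  unfold extS
  have hr0 : (r:ℤ) ≠ 0 := by omega
  have e1 : (j + (r:ℤ) - 1) % r = (j - 1) % r := by
    rw [show j + (r:ℤ) - 1 = (j - 1) + (r:ℤ) * 1 by ring, Int.add_mul_emod_self_left]
  have e2 : (j + (r:ℤ) - 1) / r = (j - 1) / r + 1 := by
    rw [show j + (r:ℤ) - 1 = (j - 1) + 1 * (r:ℤ) by ring, Int.add_mul_ediv_right _ _ hr0]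
  rw [e1, e2]
  push_cast
  ring

lemma extS_shift_int (r m : ℕ) (hr : 0 < r) (c : ℕ → ℝ) (q j : ℤ) :
    extS r m c (j + q * r) = extS r m c j - q * m := by
  induction q using Int.induction_on with
  | zero => simp
  | succ n ih =>
      have h := extS_shift r m hr c (j + n * r)
      have e : j + ((n:ℤ) + 1) * r = (j + n * r) + r := by ring
      rw [e, h, ih]; push_cast; ring
  | pred n ih =>
      have h := extS_shift r m hr c (j + (-(n:ℤ) - 1) * r)
      have e : j + (-(n:ℤ) - 1) * r + r = j + (-(n:ℤ)) * r := by ring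
      rw [e] at h
      have h2 : extS r m c (j + (-(n:ℤ) - 1) * r) = extS r m c (j + (-(n:ℤ)) * r) + m := by
        linarith
      rw [h2, ih]; push_cast; ring

lemma extS_succ_le (r m : ℕ) (hr : 0 < r) (c : ℕ → ℝ)
    (hc : ∀ i, 1 ≤ i → i < r → c (i+1) ≤ c i) (hspan : c 1 - m ≤ c r) (j : ℤ) :
    extS r m c (j + 1) ≤ extS r m c j := by
  have hr0 : (r:ℤ) ≠ 0 := by omega
  set s : ℤ := (j - 1) % r with hs
  set q : ℤ := (j - 1) / r with hq
  have hs0 : 0 ≤ s := Int.emod_nonneg _ hr0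
  have hsr : s < r := Int.emod_lt_of_pos _ (by omega)
  have hde : (r:ℤ) * q + s = j - 1 := Int.mul_ediv_add_emod _ _
  have hextj : extS r m c j = c (s.toNat + 1) - q * m := rfl
  by_cases hcase : s = (r:ℤ) - 1
  · have hj : j = (r:ℤ) * (q + 1) := by
      have h : (r:ℤ) * (q+1) = r * q + r := by ring
      omega
    have e1 : (j + 1 - 1) % r = 0 := by
      simp only [add_sub_cancel_right, hj]
      exact Int.mul_emod_right _ _
    have e2 : (j + 1 - 1) / r = q + 1 := by
      simp only [add_sub_cancel_right, hj]
      exact Int.mul_ediv_cancel_left _ hr0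
    have hext1 : extS r m c (j + 1) = c 1 - ((q + 1 : ℤ) : ℝ) * m := by
      unfold extS; rw [e1, e2]; norm_num
    have hsto : s.toNat + 1 = r := by omega
    rw [hext1, hextj, hsto]
    push_cast
    linarith
  · have hj : j = (s + 1) + (r:ℤ) * q := by omega
    have e1 : (j + 1 - 1) % r = s + 1 := by
      simp only [add_sub_cancel_right, hj]
      rw [Int.add_mul_emod_self_left]
      exact Int.emod_eq_of_lt (by omega) (by omega)
    have e2 : (j + 1 - 1) / r = q := by
      simp only [add_sub_cancel_right, hj]
      rw [show (s + 1 + (r:ℤ) * q) = (s+1) + q * r by ring]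
      rw [Int.add_mul_ediv_right _ _ hr0]
      rw [Int.ediv_eq_zero_of_lt (by omega) (by omega)]
      ring
    have hext1 : extS r m c (j + 1) = c ((s+1).toNat + 1) - (q : ℝ) * m := by
      unfold extS; rw [e1, e2]
    rw [hext1, hextj]
    have hstep := hc (s.toNat + 1) (by omega) (by omega)
    have h2 : (s+1).toNat + 1 = (s.toNat + 1) + 1 := by omega
    rw [h2]
    linarith

lemma extS_antitone (r m : ℕ) (hr : 0 < r) (c : ℕ → ℝ)
    (hc : ∀ i, 1 ≤ i → i < r → c (i+1) ≤ c i) (hspan : c 1 - m ≤ c r) :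
    Antitone (extS r m c) :=
  antitone_int_of_succ_le (extS_succ_le r m hr c hc hspan)

/-- uniqueness of shift-periodic extension -/
lemma shift_unique (r m : ℕ) (hr : 0 < r) (f g : ℤ → ℝ)
    (hf : ∀ j, f (j + r) = f j - m) (hg : ∀ j, g (j + r) = g j - m)
    (hagree : ∀ i : ℕ, 1 ≤ i → i ≤ r → f i = g i) : ∀ j, f j = g j := by
  have key : ∀ (F : ℤ → ℝ), (∀ j, F (j + r) = F j - m) → ∀ q j, F (j + q * r) = F j - q * m := by
    intro F hF q
    induction q using Int.induction_on with
    | zero => simp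
    | succ n ih =>
        intro j
        have e : j + ((n:ℤ) + 1) * r = (j + n * r) + r := by ring
        rw [e, hF, ih]; push_cast; ring
    | pred n ih =>
        intro j
        have h := hF (j + (-(n:ℤ) - 1) * r)
        have e : j + (-(n:ℤ) - 1) * r + r = j + (-(n:ℤ)) * r := by ring
        rw [e, ih] at h
        push_cast at h ⊢
        linarith
  intro j
  have hr0 : (r:ℤ) ≠ 0 := by omega
  set s : ℤ := (j - 1) % r with hs
  set q : ℤ := (j - 1) / r with hq
  have hs0 : 0 ≤ s := Int.emod_nonneg _ hr0
  have hsr : s < r := Int.emod_lt_of_pos _ (by omega)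
  have hde : (r:ℤ) * q + s = j - 1 := Int.mul_ediv_add_emod _ _
  have hj : j = ((s.toNat + 1 : ℕ) : ℤ) + q * r := by push_cast; linarith [hde, (by omega : ((s.toNat:ℤ)) = s)]
  rw [hj, key f hf, key g hg, hagree (s.toNat + 1) (by omega) (by omega)]

lemma gal (r m : ℕ) (hr : 0 < r) (hm : 0 < m) (c : ℕ → ℝ)
    (hc : ∀ i, 1 ≤ i → i < r → c (i+1) ≤ c i) (hspan : c 1 - m ≤ c r)
    (t : ℝ) (j : ℤ) :
    t < extS r m c j ↔ j ≤ ∑ i ∈ Finset.Icc 1 r, ⌈(c i - t)/m⌉ := by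
  have hmR : (0:ℝ) < m := by exact_mod_cast hm
  -- c is antitone on [1,r]
  have cmono : ∀ i j : ℕ, 1 ≤ i → i ≤ j → j ≤ r → c j ≤ c i := by
    intro i j h1 hij hjr
    induction j with
    | zero => omega
    | succ n ih =>
        rcases Nat.eq_or_lt_of_le hij with h | h
        · rw [← h]
        · calc c (n+1) ≤ c n := hc n (by omega) (by omega)
            _ ≤ c i := ih (by omega) (by omega)
  set k : ℕ → ℤ := fun i => ⌈(c i - t)/m⌉ with hk
  have kmono : ∀ i j : ℕ, 1 ≤ i → i ≤ j → j ≤ r → k j ≤ k i := by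
    intro i j h1 hij hjr
    apply Int.ceil_le_ceil
    gcongr
    exact cmono i j h1 hij hjr
  have kspan : k 1 ≤ k r + 1 := by
    have h1 : (c 1 - t)/m ≤ (c r - t)/m + 1 := by
      rw [div_add' _ _ _ (ne_of_gt hmR)]
      gcongr
      linarith
    have h2 : ⌈(c 1 - t)/m⌉ ≤ ⌈(c r - t)/m + (1:ℤ)⌉ := by
      apply Int.ceil_le_ceil; push_cast; linarith
    rw [Int.ceil_add_intCast] at h2
    exact h2
  set K : ℤ := k 1 with hK
  set S : Finset ℕ := (Finset.Icc 1 r).filter (fun i => k i = K) with hS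
  have h1S : 1 ∈ S := by
    simp only [hS, Finset.mem_filter, Finset.mem_Icc]
    exact ⟨⟨le_rfl, hr⟩, rfl⟩
  have hSne : S.Nonempty := ⟨1, h1S⟩
  set p : ℕ := S.max' hSne with hp
  have hpS : p ∈ S := Finset.max'_mem _ _
  have hp1 : 1 ≤ p := by
    have := (Finset.mem_filter.mp hpS).1
    exact (Finset.mem_Icc.mp this).1
  have hpr : p ≤ r := by
    have := (Finset.mem_filter.mp hpS).1
    exact (Finset.mem_Icc.mp this).2
  have hkp : k p = K := (Finset.mem_filter.mp hpS).2
  have hkeq : ∀ i, 1 ≤ i → i ≤ p → k i = K := by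
    intro i h1 h2
    have hiK : k i ≤ K := kmono 1 i le_rfl h1 (le_trans h2 hpr)
    have hKi : K ≤ k i := hkp ▸ kmono i p h1 h2 hpr
    omega
  have hkeq2 : ∀ i, p < i → i ≤ r → k i = K - 1 := by
    intro i hpi hir
    have hne : k i ≠ K := by
      intro h
      have : i ∈ S := by
        simp only [hS, Finset.mem_filter, Finset.mem_Icc]
        exact ⟨⟨by omega, hir⟩, h⟩
      have := Finset.le_max' S i this
      omega
    have hle : k i ≤ K := kmono 1 i le_rfl (by omega) hir
    have hge : K - 1 ≤ k i := by
      have := kmono i r (by omega) hir le_rfl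
      omega
    omega
  have hsum : ∑ i ∈ Finset.Icc 1 r, k i = (K - 1) * r + p := by
    have hIcc : Finset.Icc 1 r = Finset.Ioc 0 r := Finset.Icc_add_one_left_eq_Ioc 0 r
    rw [hIcc, ← Finset.sum_Ioc_consecutive _ (Nat.zero_le p) hpr]
    have s1 : ∑ i ∈ Finset.Ioc 0 p, k i = (p : ℤ) * K := by
      rw [Finset.sum_congr rfl (fun i hi => by
        have := Finset.mem_Ioc.mp hi
        exact hkeq i (by omega) this.2)]
      rw [Finset.sum_const, Nat.card_Ioc]
      simp only [Nat.sub_zero, smul_eq_mul]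
      ring
    have s2 : ∑ i ∈ Finset.Ioc p r, k i = ((r : ℤ) - p) * (K - 1) := by
      rw [Finset.sum_congr rfl (fun i hi => by
        have := Finset.mem_Ioc.mp hi
        exact hkeq2 i this.1 this.2)]
      rw [Finset.sum_const, Nat.card_Ioc, nsmul_eq_mul, Nat.cast_sub hpr]
      all_goals ring
    rw [s1, s2]
    ring
  have hb1 : t < extS r m c (∑ i ∈ Finset.Icc 1 r, k i) := by
    rw [hsum, show (K - 1) * (r:ℤ) + p = (p : ℤ) + (K - 1) * r by ring]
    rw [extS_shift_int r m hr c, extS_nat r m c p hp1 hpr]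
    have h := Int.ceil_lt_add_one ((c p - t)/m)
    rw [show ⌈(c p - t)/m⌉ = K from hkp] at h
    have h2 : ((K:ℝ) - 1) * m < c p - t := by
      rw [← lt_div_iff₀ hmR]
      push_cast at h ⊢
      linarith
    push_cast
    linarith
  have hb2 : extS r m c ((∑ i ∈ Finset.Icc 1 r, k i) + 1) ≤ t := by
    by_cases hcase : p = r
    · rw [hsum, hcase, show (K - 1) * (r:ℤ) + r + 1 = ((1:ℕ) : ℤ) + K * r by push_cast; ring]
      rw [extS_shift_int r m hr c, extS_nat r m c 1 le_rfl hr]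
      have h := Int.le_ceil ((c 1 - t)/m)
      rw [show ⌈(c 1 - t)/m⌉ = K from hK.symm] at h
      rw [div_le_iff₀ hmR] at h
      push_cast at h ⊢
      linarith
    · have hpr' : p + 1 ≤ r := by omega
      rw [hsum, show (K - 1) * (r:ℤ) + p + 1 = ((p + 1 : ℕ) : ℤ) + (K - 1) * r by push_cast; ring]
      rw [extS_shift_int r m hr c, extS_nat r m c (p+1) (by omega) hpr']
      have hk1 : k (p+1) = K - 1 := hkeq2 _ (by omega) hpr'
      have h := Int.le_ceil ((c (p+1) - t)/m)
      rw [show ⌈(c (p+1) - t)/m⌉ = K - 1 from hk1] at h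
      rw [div_le_iff₀ hmR] at h
      push_cast at h ⊢
      linarith
  constructor
  · intro h
    by_contra hcon
    push_neg at hcon
    have hcon' : (∑ i ∈ Finset.Icc 1 r, k i) < j := hcon
    have hj : (∑ i ∈ Finset.Icc 1 r, k i) + 1 ≤ j := by omega
    have := extS_antitone r m hr c hc hspan hj
    linarith
  · intro hj
    have hj' : j ≤ ∑ i ∈ Finset.Icc 1 r, k i := hj
    have := extS_antitone r m hr c hc hspan hj'
    linarith

noncomputable def ee (m : ℕ) (v : ℝ) : ℂ :=
  Complex.exp (2 * (Real.pi : ℂ) * Complex.I * ((v / m : ℝ) : ℂ))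

lemma ee_eq_ee (m : ℕ) (hm : 0 < m) {v w : ℝ} :
    ee m v = ee m w ↔ ∃ k : ℤ, v = w + k * m := by
  have hm0 : (m : ℝ) ≠ 0 := by positivity
  have h2 : (2 * (Real.pi:ℂ) * Complex.I) ≠ 0 := by
    simp [Real.pi_ne_zero, Complex.I_ne_zero, Complex.ofReal_ne_zero]
  rw [ee, ee, Complex.exp_eq_exp_iff_exists_int]
  constructor
  · rintro ⟨n, hn⟩
    refine ⟨n, ?_⟩
    have hC : ((v/m : ℝ) : ℂ) = ((w/m : ℝ) : ℂ) + n := by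
      apply mul_left_cancel₀ h2
      rw [hn]; ring
    have hR : v / m = w / m + n := by exact_mod_cast hC
    have := congrArg (· * (m:ℝ)) hR
    field_simp at this
    linarith
  · rintro ⟨k, hk⟩
    refine ⟨k, ?_⟩
    have hR : v / m = w / m + k := by rw [hk]; field_simp
    have hC : ((v/m : ℝ) : ℂ) = ((w/m : ℝ) : ℂ) + k := by exact_mod_cast hR
    rw [hC]; ring

lemma conj_ee (m : ℕ) (v : ℝ) : (starRingEnd ℂ) (ee m v) = ee m (-v) := by
  rw [ee, ee, ← Complex.exp_conj]
  congr 1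
  simp only [map_mul, Complex.conj_I, Complex.conj_ofReal, map_ofNat]
  push_cast
  ring

open Classical in
noncomputable def gf (m : ℕ) (t t' : ℝ) (z : ℂ) : ℤ :=
  if h : ∃ v : ℝ, ee m v = z then ⌈(h.choose - t)/m⌉ - ⌈(h.choose - t')/m⌉ else 0

lemma gf_ee (m : ℕ) (hm : 0 < m) (t t' v : ℝ) :
    gf m t t' (ee m v) = ⌈(v - t)/m⌉ - ⌈(v - t')/m⌉ := by
  have hm0 : (m:ℝ) ≠ 0 := by positivity
  have hex : ∃ w : ℝ, ee m w = ee m v := ⟨v, rfl⟩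
  rw [gf, dif_pos hex]

  obtain ⟨kk, hkk⟩ := (ee_eq_ee m hm).mp hex.choose_spec
  have key : ∀ s : ℝ, ⌈(hex.choose - s)/m⌉ = ⌈(v - s)/m⌉ + kk := by
    intro s
    rw [hkk, show (v + (kk:ℝ)*m - s)/m = (v - s)/m + (kk:ℝ) by field_simp; ring]
    exact Int.ceil_add_intCast _ kk
  rw [key t, key t']
  ring

lemma key_backward (r m : ℕ) (hr : 0 < r) (hm : 0 < m) (c : ℕ → ℝ)
    (hc : ∀ i, 1 ≤ i → i < r → c (i+1) ≤ c i) (hspan : c 1 - m ≤ c r)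
    (hmult : (Finset.Icc 1 r).val.map (fun i => ee m (-(c i)))
           = (Finset.Icc 1 r).val.map (fun i => ee m (c i))) :
    ∃ k₀ s : ℤ, 0 ≤ k₀ ∧ k₀ ≤ (r:ℤ) - 1 ∧
      ∀ i j : ℕ, 1 ≤ i → i ≤ r → 1 ≤ j → j ≤ r →
        ((i:ℤ) + j = r + 1 - k₀ → c i + c j = s * m) ∧
        ((i:ℤ) + j = 2*r + 1 - k₀ → c i + c j = (s - 1) * m) := by
  have hr0 : (r:ℤ) ≠ 0 := by omega
  set y : ℕ → ℝ := fun i => -c (r + 1 - i) with hy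
  have hcy : ∀ i, 1 ≤ i → i < r → y (i+1) ≤ y i := by
    intro i h1 h2
    have e1 : r + 1 - (i+1) = r - i := by omega
    have e2 : r + 1 - i = (r - i) + 1 := by omega
    simp only [hy, e1, e2]
    have := hc (r - i) (by omega) (by omega)
    linarith
  have hspany : y 1 - m ≤ y r := by
    have e1 : r + 1 - 1 = r := by omega
    have e2 : r + 1 - r = 1 := by omega
    simp only [hy, e1, e2]
    linarith
  have hcount : ∀ t t' : ℝ,
      (∑ i ∈ Finset.Icc 1 r, ⌈(y i - t)/m⌉) - (∑ i ∈ Finset.Icc 1 r, ⌈(y i - t')/m⌉)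
    = (∑ i ∈ Finset.Icc 1 r, ⌈(c i - t)/m⌉) - (∑ i ∈ Finset.Icc 1 r, ⌈(c i - t')/m⌉) := by
    intro t t'
    have hyrefl : ∀ s : ℝ, ∑ i ∈ Finset.Icc 1 r, ⌈(y i - s)/m⌉
        = ∑ i ∈ Finset.Icc 1 r, ⌈(-(c i) - s)/m⌉ := by
      intro s
      refine Finset.sum_nbij' (fun i => r + 1 - i) (fun i => r + 1 - i) ?_ ?_ ?_ ?_ ?_
      · intro a ha; simp only [Finset.mem_Icc] at *; omega
      · intro a ha; simp only [Finset.mem_Icc] at *; omega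
      · intro a ha; simp only [Finset.mem_Icc] at ha
        show r + 1 - (r + 1 - a) = a
        omega
      · intro a ha; simp only [Finset.mem_Icc] at ha
        show r + 1 - (r + 1 - a) = a
        omega
      · intro a ha
        simp only [Finset.mem_Icc] at ha
        have e : r + 1 - (r + 1 - a) = a := by omega
        show ⌈(y a - s) / (m:ℝ)⌉ = ⌈(-(c (r + 1 - a)) - s) / (m:ℝ)⌉
        simp only [hy]
    have hmult2 := congrArg (fun mu : Multiset ℂ => (mu.map (gf m t t')).sum) hmult
    simp only [Multiset.map_map, Function.comp] at hmult2
    have conv1 : ((Finset.Icc 1 r).val.map (fun i => gf m t t' (ee m (-(c i))))).sum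
        = ∑ i ∈ Finset.Icc 1 r, gf m t t' (ee m (-(c i))) := rfl
    have conv2 : ((Finset.Icc 1 r).val.map (fun i => gf m t t' (ee m (c i)))).sum
        = ∑ i ∈ Finset.Icc 1 r, gf m t t' (ee m (c i)) := rfl
    rw [conv1, conv2] at hmult2
    simp only [gf_ee m hm t t'] at hmult2
    simp only [Finset.sum_sub_distrib] at hmult2
    rw [hyrefl t, hyrefl t']
    linarith [hmult2]
  have galc := gal r m hr hm c hc hspan
  have galy := gal r m hr hm y hcy hspany
  set d : ℤ := (∑ i ∈ Finset.Icc 1 r, ⌈(c i - 0)/m⌉) - (∑ i ∈ Finset.Icc 1 r, ⌈(y i - 0)/m⌉) with hd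
  have hdall : ∀ t : ℝ, (∑ i ∈ Finset.Icc 1 r, ⌈(y i - t)/m⌉)
      = (∑ i ∈ Finset.Icc 1 r, ⌈(c i - t)/m⌉) - d := by
    intro t
    have := hcount t 0
    omega
  have hshift : ∀ j : ℤ, extS r m y j = extS r m c (j + d) := by
    intro j
    have hiff : ∀ t : ℝ, t < extS r m y j ↔ t < extS r m c (j + d) := by
      intro t
      rw [galy t j, galc t (j + d), hdall t]
      omega
    exact le_antisymm (le_of_forall_lt fun t ht => (hiff t).mp ht)
      (le_of_forall_lt fun t ht => (hiff t).mpr ht)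
  have hrefl : ∀ j : ℤ, extS r m y j = -extS r m c ((r:ℤ) + 1 - j) := by
    apply shift_unique r m hr
    · intro j; exact extS_shift r m hr y j
    · intro j
      show -extS r m c ((r:ℤ) + 1 - (j + r)) = -extS r m c ((r:ℤ) + 1 - j) - m
      have h := extS_shift r m hr c ((r:ℤ) + 1 - (j + r))
      rw [show (r:ℤ) + 1 - (j + r) + r = (r:ℤ) + 1 - j by ring] at h
      linarith
    · intro i h1 h2
      rw [extS_nat r m y i h1 h2]
      have e : ((r:ℤ) + 1 - i) = ((r + 1 - i : ℕ) : ℤ) := by push_cast; omega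
      show y i = -extS r m c ((r:ℤ) + 1 - i)
      rw [e, extS_nat r m c (r + 1 - i) (by omega) (by omega)]
  have hpair : ∀ u : ℤ, extS r m c u + extS r m c ((r:ℤ) + 1 + d - u) = 0 := by
    intro u
    have h1 := hshift (u - d)
    have h2 := hrefl (u - d)
    rw [show u - d + d = u by ring] at h1
    rw [show (r:ℤ) + 1 - (u - d) = (r:ℤ) + 1 + d - u by ring] at h2
    linarith
  have hk0pos : 0 ≤ (-d) % r := Int.emod_nonneg _ hr0
  have hk0lt : (-d) % r < r := Int.emod_lt_of_pos _ (by omega)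
  refine ⟨(-d) % r, -((-d) / r), hk0pos, by omega, ?_⟩
  have hdq : d + (-d) % r = (-((-d) / r)) * r := by
    have h := Int.mul_ediv_add_emod (-d) r
    have h2 : (-((-d) / r)) * (r:ℤ) = -((r:ℤ) * ((-d)/r)) := by ring
    linarith
  intro i j hi1 hir hj1 hjr
  constructor
  · intro hsum
    have h := hpair (i:ℤ)
    have hidx : (r:ℤ) + 1 + d - i = (j:ℤ) + (-((-d) / r)) * r := by linear_combination hdq - hsum
    rw [hidx, extS_shift_int r m hr c (-((-d) / r)) (j:ℤ),
      extS_nat r m c i hi1 hir, extS_nat r m c j hj1 hjr] at h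
    push_cast at h ⊢
    linarith
  · intro hsum
    have h := hpair (i:ℤ)
    have hidx : (r:ℤ) + 1 + d - i = (j:ℤ) + ((-((-d) / r)) - 1) * r := by
      linear_combination hdq - hsum
    rw [hidx, extS_shift_int r m hr c ((-((-d) / r)) - 1) (j:ℤ),
      extS_nat r m c i hi1 hir, extS_nat r m c j hj1 hjr] at h
    push_cast at h ⊢
    linarith

/-- Let `r, m ≥ 1` and `a ∈ ℝ^r` with
`a 1 ≥ a 2 ≥ ⋯ ≥ a r ≥ a 1 − m`.  Then there exist integers `k₀, ℓ` with
`0 ≤ k₀ ≤ r − 1` satisfying condition (★)(k₀,ℓ) — i.e. `a i + a j = −ℓ` whenever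
`i + j = r + 1 − k₀` and `a i + a j = −ℓ − m` whenever `i + j = 2r + 1 − k₀`
(`1 ≤ i, j ≤ r`) — iff there exists a half-integer `ν` such that
`∏_{i=1}^r (X − exp(2π√−1·(a i + ν)/m))` has all coefficients real. -/
theorem stmt_9 (r m : ℕ) (hr : 0 < r) (hm : 0 < m)
    (a : ℕ → ℝ)
    (hmono : ∀ i : ℕ, 1 ≤ i → i < r → a (i + 1) ≤ a i)
    (hlast : a 1 - m ≤ a r) :
    (∃ (k₀ ℓ : ℤ), 0 ≤ k₀ ∧ k₀ ≤ (r : ℤ) - 1 ∧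
      ∀ i j : ℕ, 1 ≤ i → i ≤ r → 1 ≤ j → j ≤ r →
        ((i : ℤ) + j = r + 1 - k₀ → a i + a j = -(ℓ : ℝ)) ∧
        ((i : ℤ) + j = 2 * r + 1 - k₀ → a i + a j = -(ℓ : ℝ) - m)) ↔
    (∃ ν : ℝ, (∃ z : ℤ, 2 * ν = (z : ℝ)) ∧
      ∀ n : ℕ, ((∏ i ∈ Finset.Icc 1 r,
        (X - Polynomial.C (Complex.exp
          (2 * (Real.pi : ℂ) * Complex.I * (((a i + ν) / m : ℝ) : ℂ))))).coeff n)
        ∈ Set.range ((↑) : ℝ → ℂ)) := by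
  constructor
  · rintro ⟨k₀, ℓ, hk0, hk1, H⟩
    refine ⟨(ℓ:ℝ)/2, ⟨ℓ, by ring⟩, ?_⟩
    intro n
    set k : ℕ := k₀.toNat with hkdef
    have hkk : (k:ℤ) = k₀ := Int.toNat_of_nonneg hk0
    have hkr : k + 1 ≤ r := by omega
    set c : ℕ → ℝ := fun i => a i + (ℓ:ℝ)/2 with hcdef
    have hconj : (∏ i ∈ Finset.Icc 1 r, (X - C (ee m (c i)))).map (starRingEnd ℂ)
               = ∏ i ∈ Finset.Icc 1 r, (X - C (ee m (c i))) := by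
      rw [Polynomial.map_prod]
      simp only [Polynomial.map_sub, map_X, map_C, conj_ee]
      refine Finset.prod_nbij' (fun i => if i ≤ r - k then r + 1 - k - i else 2*r + 1 - k - i)
        (fun i => if i ≤ r - k then r + 1 - k - i else 2*r + 1 - k - i) ?_ ?_ ?_ ?_ ?_
      · intro i hi; simp only [Finset.mem_Icc] at *; split_ifs <;> omega
      · intro i hi; simp only [Finset.mem_Icc] at *; split_ifs <;> omega
      · intro i hi; simp only [Finset.mem_Icc] at hi
        show (if (if i ≤ r - k then r + 1 - k - i else 2*r + 1 - k - i) ≤ r - k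
          then r + 1 - k - (if i ≤ r - k then r + 1 - k - i else 2*r + 1 - k - i)
          else 2*r + 1 - k - (if i ≤ r - k then r + 1 - k - i else 2*r + 1 - k - i)) = i
        split_ifs <;> omega
      · intro i hi; simp only [Finset.mem_Icc] at hi
        show (if (if i ≤ r - k then r + 1 - k - i else 2*r + 1 - k - i) ≤ r - k
          then r + 1 - k - (if i ≤ r - k then r + 1 - k - i else 2*r + 1 - k - i)
          else 2*r + 1 - k - (if i ≤ r - k then r + 1 - k - i else 2*r + 1 - k - i)) = i
        split_ifs <;> omega
      · intro i hi
        simp only [Finset.mem_Icc] at hi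
        have hee : ee m (c (if i ≤ r - k then r + 1 - k - i else 2*r + 1 - k - i))
            = ee m (-(c i)) := by
          by_cases hcase : i ≤ r - k
          · rw [if_pos hcase]
            have hσ1 : 1 ≤ r + 1 - k - i := by omega
            have hσ2 : r + 1 - k - i ≤ r := by omega
            have hH := (H i (r+1-k-i) hi.1 hi.2 hσ1 hσ2).1 (by push_cast; omega)
            have hcc : c (r+1-k-i) = -(c i) := by
              simp only [hcdef]
              linarith
            rw [hcc]
          · rw [if_neg hcase]
            have hσ1 : 1 ≤ 2*r + 1 - k - i := by omega
            have hσ2 : 2*r + 1 - k - i ≤ r := by omega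
            have hH := (H i (2*r+1-k-i) hi.1 hi.2 hσ1 hσ2).2 (by push_cast; omega)
            refine (ee_eq_ee m hm).mpr ⟨-1, ?_⟩
            simp only [hcdef]
            push_cast
            linarith
        show X - C (ee m (-(c i)))
          = X - C (ee m (c (if i ≤ r - k then r + 1 - k - i else 2*r + 1 - k - i)))
        rw [hee]
    have hcoe : (starRingEnd ℂ) ((∏ i ∈ Finset.Icc 1 r, (X - C (ee m (c i)))).coeff n)
        = (∏ i ∈ Finset.Icc 1 r, (X - C (ee m (c i)))).coeff n := by
      rw [← Polynomial.coeff_map, hconj]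
    obtain ⟨x, hx⟩ := Complex.conj_eq_iff_real.mp hcoe
    exact ⟨x, hx.symm⟩
  · rintro ⟨ν, ⟨z, hz⟩, hco⟩
    set c : ℕ → ℝ := fun i => a i + ν with hcdef
    have hc : ∀ i, 1 ≤ i → i < r → c (i+1) ≤ c i := by
      intro i h1 h2
      simp only [hcdef]
      have := hmono i h1 h2
      linarith
    have hspan : c 1 - m ≤ c r := by simp only [hcdef]; linarith
    have hP : (∏ i ∈ Finset.Icc 1 r, (X - C (ee m (c i)))).map (starRingEnd ℂ)
            = ∏ i ∈ Finset.Icc 1 r, (X - C (ee m (c i))) := by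
      apply Polynomial.ext
      intro n
      rw [Polynomial.coeff_map]
      obtain ⟨x, hx⟩ := hco n
      have hx' : (x:ℂ) = (∏ i ∈ Finset.Icc 1 r, (X - C (ee m (c i)))).coeff n := hx
      rw [← hx']
      exact Complex.conj_ofReal x
    have keyroots : ∀ f : ℕ → ℂ, (∏ i ∈ Finset.Icc 1 r, (X - C (f i))).roots
        = (Finset.Icc 1 r).val.map f := by
      intro f
      have h := Polynomial.roots_multiset_prod_X_sub_C ((Finset.Icc 1 r).val.map f)
      rw [Multiset.map_map] at h
      rw [Finset.prod_eq_multiset_prod]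
      convert h using 2
      rfl
    have hmult : (Finset.Icc 1 r).val.map (fun i => ee m (-(c i)))
               = (Finset.Icc 1 r).val.map (fun i => ee m (c i)) := by
      have h1 : (∏ i ∈ Finset.Icc 1 r, (X - C (ee m (c i)))).map (starRingEnd ℂ)
              = ∏ i ∈ Finset.Icc 1 r, (X - C (ee m (-(c i)))) := by
        rw [Polynomial.map_prod]
        simp only [Polynomial.map_sub, map_X, map_C, conj_ee]
      have h2 : (∏ i ∈ Finset.Icc 1 r, (X - C (ee m (-(c i)))))
              = ∏ i ∈ Finset.Icc 1 r, (X - C (ee m (c i))) := by rw [← h1, hP]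
      rw [← keyroots (fun i => ee m (-(c i))), ← keyroots (fun i => ee m (c i)), h2]
    obtain ⟨k₀, s, h0, h1, hKB⟩ := key_backward r m hr hm c hc hspan hmult
    refine ⟨k₀, z - s * m, h0, h1, ?_⟩
    intro i j hi1 hir hj1 hjr
    obtain ⟨HA, HB⟩ := hKB i j hi1 hir hj1 hjr
    constructor
    · intro hsum
      have h := HA hsum
      simp only [hcdef] at h
      push_cast
      linarith [hz]
    · intro hsum
      have h := HB hsum
      simp only [hcdef] at h
      push_cast
      linarith [hz]
end

section
/- Let m be a positive integer, let c_1 ≥ c_2 ≥ ⋯ ≥ c_r be real numbers with 0 ≥ c_1 and c_r > −m, and let s := #{ i : c_i = 0 }. If the polynomial ∏_{i=1}^r (X − exp(2π√−1·c_i/m)) has all coefficients real, then c_{s+j} + c_{r+1−j} = −m for every j = 1,…,r−s. -/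
open Polynomial

private lemma multiset_map_injOn {α β : Type*} [DecidableEq α] {A : Set α} {e : α → β}
    (he : Set.InjOn e A) :
    ∀ (s t : Multiset α), (∀ x ∈ s, x ∈ A) → (∀ x ∈ t, x ∈ A) →
      s.map e = t.map e → s = t := by
  intro s
  induction s using Multiset.induction with
  | empty =>
    intro t _ _ h
    have : t.map e = 0 := h.symm.trans (by simp)
    simpa [eq_comm, Multiset.map_eq_zero] using this
  | cons a s ih =>
    intro t hs ht h
    have ha : e a ∈ t.map e := by
      rw [← h]; exact Multiset.mem_map_of_mem _ (Multiset.mem_cons_self _ _)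
    obtain ⟨b, hb, hba⟩ := Multiset.mem_map.mp ha
    have hab : b = a := he (ht b hb) (hs a (Multiset.mem_cons_self _ _)) hba
    subst hab
    have ht' : t = b ::ₘ t.erase b := (Multiset.cons_erase hb).symm
    rw [ht', Multiset.map_cons, Multiset.map_cons, Multiset.cons_inj_right] at h
    have hst : s = t.erase b := by
      refine ih (t.erase b) (fun x hx => hs x (Multiset.mem_cons_of_mem hx))
        (fun x hx => ht x (Multiset.mem_of_mem_erase hx)) h
    rw [ht', hst]

/-- Let `m ≥ 1`, and let `c 1 ≥ c 2 ≥ ⋯ ≥ c r` be reals with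
`0 ≥ c 1` and `c r > −m`; let `s := #{i : c i = 0}` (since the `c i` are
nonincreasing, `c i = 0` exactly for `i ≤ s`).  If
`∏_{i=1}^r (X − exp(2π√−1·c i/m))` has all coefficients real, then
`c (s+j) + c (r+1−j) = −m` for every `j = 1,…,r−s`. -/
theorem stmt_10 (r m s : ℕ) (hr : 1 ≤ r) (hm : 0 < m)
    (c : ℕ → ℝ)
    (hmono : ∀ i : ℕ, 1 ≤ i → i < r → c (i + 1) ≤ c i)
    (hc1 : c 1 ≤ 0) (hcr : -(m : ℝ) < c r)
    (hsr : s ≤ r) (hs : ∀ i : ℕ, 1 ≤ i → i ≤ r → (c i = 0 ↔ i ≤ s))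
    (hreal : ∀ n : ℕ, ((∏ i ∈ Finset.Icc 1 r,
        (X - Polynomial.C (Complex.exp
          (2 * (Real.pi : ℂ) * Complex.I * ((c i / m : ℝ) : ℂ))))).coeff n)
        ∈ Set.range ((↑) : ℝ → ℂ)) :
    ∀ j : ℕ, 1 ≤ j → j ≤ r - s → c (s + j) + c (r + 1 - j) = -(m : ℝ) := by
  have hm0 : (m : ℝ) ≠ 0 := by positivity
  set e : ℝ → ℂ := fun x => Complex.exp (2 * (Real.pi : ℂ) * Complex.I * ((x / m : ℝ) : ℂ))
    with he_def
  -- injectivity of `e` on `Ioc (-m) 0`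
  have he_inj : Set.InjOn e (Set.Ioc (-(m : ℝ)) 0) := by
    intro x hx y hy hxy
    obtain ⟨n, hn⟩ := Complex.exp_eq_exp_iff_exists_int.mp hxy
    have h2 : ((x / m : ℝ) : ℂ) = ((y / m : ℝ) : ℂ) + n := by
      have hne : (2 * (Real.pi : ℂ) * Complex.I) ≠ 0 := by
        simp [Real.pi_ne_zero, Complex.I_ne_zero, Complex.ofReal_ne_zero]
      have : (2 * (Real.pi : ℂ) * Complex.I) * ((x / m : ℝ) : ℂ)
          = (2 * (Real.pi : ℂ) * Complex.I) * (((y / m : ℝ) : ℂ) + n) := by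
        rw [hn]; ring
      exact mul_left_cancel₀ hne this
    have h3 : (x / m : ℝ) = y / m + n := by exact_mod_cast h2
    have h4 : x = y + n * m := by
      have h := congrArg (fun z : ℝ => z * m) h3
      rw [div_mul_cancel₀ _ hm0, add_mul, div_mul_cancel₀ _ hm0] at h
      exact h
    have hn0 : n = 0 := by
      have hb1 : (n : ℝ) * m < m := by
        obtain ⟨hx1, hx2⟩ := hx; obtain ⟨hy1, hy2⟩ := hy; nlinarith
      have hb2 : -(m : ℝ) < n * m := by
        obtain ⟨hx1, hx2⟩ := hx; obtain ⟨hy1, hy2⟩ := hy; nlinarith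
      have hmpos : (0 : ℝ) < m := by positivity
      have h5 : (n : ℝ) < 1 := by nlinarith
      have h6 : (-1 : ℝ) < (n : ℝ) := by nlinarith
      have h5' : n < 1 := by exact_mod_cast h5
      have h6' : -1 < n := by exact_mod_cast h6
      omega
    rw [hn0] at h4
    simpa using h4
  -- conjugation formula
  have hconj : ∀ x : ℝ, (starRingEnd ℂ) (e x) = e (-(m : ℝ) - x) := by
    intro x
    rw [he_def]
    simp only
    rw [← Complex.exp_conj]
    apply Complex.exp_eq_exp_iff_exists_int.mpr
    refine ⟨1, ?_⟩
    have hm0c : (m : ℂ) ≠ 0 := by exact_mod_cast hm0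
    simp only [map_mul, Complex.conj_I, Complex.conj_ofReal, map_ofNat]
    push_cast
    field_simp
    ring
  set f : ℝ → ℝ := fun x => if x = 0 then 0 else -(m : ℝ) - x with hf_def
  have hconj' : ∀ x : ℝ, (starRingEnd ℂ) (e x) = e (f x) := by
    intro x
    by_cases hx : x = 0
    · subst hx
      have h0 : e 0 = 1 := by simp [he_def]
      have hf0 : f 0 = 0 := by simp [hf_def]
      rw [h0, hf0, h0]; simp
    · rw [hconj x, hf_def]; simp [hx]
  -- antitonicity
  have hanti : ∀ j, j ≤ r → ∀ i, 1 ≤ i → i ≤ j → c j ≤ c i := by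
    intro j
    induction j with
    | zero => intro _ i hi hij; omega
    | succ j ih =>
      intro hj i hi hij
      rcases Nat.eq_or_lt_of_le hij with h | h
      · rw [h]
      · have hij' : i ≤ j := by omega
        have h1j : 1 ≤ j := le_trans hi hij'
        exact le_trans (hmono j h1j (by omega)) (ih (by omega) i hi hij')
  have hub : ∀ i, 1 ≤ i → i ≤ r → c i ≤ 0 := by
    intro i h1 h2
    by_cases hi1 : i = 1
    · rw [hi1]; exact hc1
    · calc c i ≤ c 1 := hanti i h2 1 le_rfl h1
        _ ≤ 0 := hc1
  have hlb : ∀ i, 1 ≤ i → i ≤ r → -(m : ℝ) < c i := by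
    intro i h1 h2
    calc -(m : ℝ) < c r := hcr
      _ ≤ c i := hanti r le_rfl i h1 h2
  -- the polynomial is conj-invariant
  set P : Polynomial ℂ := ∏ i ∈ Finset.Icc 1 r, (X - Polynomial.C (e (c i))) with hP_def
  have hPfix : P.map (starRingEnd ℂ) = P := by
    ext n
    rw [Polynomial.coeff_map]
    obtain ⟨y, hy⟩ := hreal n
    have : P.coeff n = (y : ℂ) := by rw [hP_def, he_def]; exact hy.symm
    rw [this, Complex.conj_ofReal]
  have hPmap : P.map (starRingEnd ℂ)
      = ∏ i ∈ Finset.Icc 1 r, (X - Polynomial.C (e (f (c i)))) := by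
    rw [hP_def, Polynomial.map_prod]
    refine Finset.prod_congr rfl fun i _ => ?_
    rw [Polynomial.map_sub, Polynomial.map_X, Polynomial.map_C, hconj']
  -- multiset of root data
  set C : Multiset ℝ := (Finset.Icc 1 r).val.map c with hC_def
  have hroots : ∀ g : ℝ → ℝ,
      (∏ i ∈ Finset.Icc 1 r, (X - Polynomial.C (e (g (c i))))).roots
        = (C.map g).map e := by
    intro g
    rw [Finset.prod_eq_multiset_prod]
    have hh : Multiset.map (fun i => X - Polynomial.C (e (g (c i)))) (Finset.Icc 1 r).val
        = Multiset.map (fun a => X - Polynomial.C a)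
          (Multiset.map e (Multiset.map g C)) := by
      rw [hC_def, Multiset.map_map, Multiset.map_map, Multiset.map_map]
      exact Multiset.map_congr rfl fun x _ => rfl
    rw [hh, roots_multiset_prod_X_sub_C]
  have hCf : C.map f = C := by
    have h1 : (C.map f).map e = (C.map id).map e := by
      have e1 := hroots f
      have e2 := hroots id
      simp only [id] at e2
      rw [← hPmap, hPfix] at e1
      rw [e1] at e2
      simpa using e2
    have hmem : ∀ x ∈ C, x ∈ Set.Ioc (-(m : ℝ)) 0 := by
      intro x hx
      obtain ⟨i, hi, rfl⟩ := Multiset.mem_map.mp hx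
      rw [Finset.mem_val, Finset.mem_Icc] at hi
      exact ⟨hlb i hi.1 hi.2, hub i hi.1 hi.2⟩
    have hmemf : ∀ x ∈ C.map f, x ∈ Set.Ioc (-(m : ℝ)) 0 := by
      intro x hx
      obtain ⟨y, hy, rfl⟩ := Multiset.mem_map.mp hx
      obtain ⟨h1, h2⟩ := hmem y hy
      by_cases hy0 : y = 0
      · simp [hf_def, hy0]
        exact_mod_cast hm
      · have hy2 : y < 0 := lt_of_le_of_ne h2 hy0
        constructor
        · simp [hf_def, hy0]; linarith
        · simp [hf_def, hy0]; linarith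
    have := multiset_map_injOn he_inj (C.map f) (C.map id) hmemf
      (by simpa using hmem) h1
    simpa using this
  -- split off the zero part
  have hsplit : Finset.Icc 1 r
      = (Finset.Icc 1 s).disjUnion (Finset.Icc (s+1) r)
        (by rw [Finset.disjoint_left]; intro a ha hb;
            rw [Finset.mem_Icc] at ha hb; omega) := by
    ext a
    simp only [Finset.mem_disjUnion, Finset.mem_Icc]
    omega
  set A : Multiset ℝ := (Finset.Icc 1 s).val.map c with hA_def
  set N : Multiset ℝ := (Finset.Icc (s+1) r).val.map c with hN_def
  have hCAN : C = A + N := by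
    rw [hC_def, hsplit]
    have hval : ((Finset.Icc 1 s).disjUnion (Finset.Icc (s+1) r)
        (by rw [Finset.disjoint_left]; intro a ha hb;
            rw [Finset.mem_Icc] at ha hb; omega)).val
        = (Finset.Icc 1 s).val + (Finset.Icc (s+1) r).val := rfl
    rw [hval, Multiset.map_add, hA_def, hN_def]
  have hA0 : ∀ x ∈ A, x = (0 : ℝ) := by
    intro x hx
    obtain ⟨i, hi, rfl⟩ := Multiset.mem_map.mp hx
    rw [Finset.mem_val, Finset.mem_Icc] at hi
    exact (hs i hi.1 (le_trans hi.2 hsr)).mpr hi.2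
  have hAf : A.map f = A := by
    rw [show A.map f = A.map id from
      Multiset.map_congr rfl (fun x hx => by rw [hA0 x hx]; simp [hf_def])]
    simp
  have hNf : N.map f = N := by
    have h := hCf
    rw [hCAN, Multiset.map_add, hAf] at h
    exact add_left_cancel h
  have hNne : ∀ x ∈ N, x ≠ (0 : ℝ) := by
    intro x hx
    obtain ⟨i, hi, rfl⟩ := Multiset.mem_map.mp hx
    rw [Finset.mem_val, Finset.mem_Icc] at hi
    intro h0
    have := (hs i (by omega) hi.2).mp h0
    omega
  have hN' : N.map (fun x => -(m : ℝ) - x) = N := by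
    have h : N.map f = N.map (fun x => -(m : ℝ) - x) :=
      Multiset.map_congr rfl (fun x hx => by simp [hf_def, hNne x hx])
    rw [← h, hNf]
  -- lists
  set k : ℕ := r - s with hk_def
  have hrk : r = s + k := by omega
  have hNlist : N = ↑((List.range k).map (fun j => c (s + 1 + j))) := by
    have hIcc : Finset.Icc (s+1) r
        = Finset.map ⟨fun j => s + 1 + j, fun a b h => by
          have h' : s + 1 + a = s + 1 + b := h; omega⟩ (Finset.range k) := by
      ext a
      simp only [Finset.mem_Icc, Finset.mem_map, Finset.mem_range,
        Function.Embedding.coeFn_mk]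
      constructor
      · intro h; exact ⟨a - (s+1), by omega, by show s + 1 + (a - (s+1)) = a; omega⟩
      · rintro ⟨b, hb, rfl⟩
        show s + 1 ≤ s + 1 + b ∧ s + 1 + b ≤ r
        omega
    rw [hN_def, hIcc, Finset.map_val, Finset.range_val, ← Multiset.coe_range,
      Multiset.map_coe, Multiset.map_coe, List.map_map]
    rfl
  -- reflection of `range k`
  have hrefl : (Multiset.range k).map (fun j => k - 1 - j) = Multiset.range k := by
    have himg : Finset.image (fun j => k - 1 - j) (Finset.range k) = Finset.range k := by
      ext a
      simp only [Finset.mem_image, Finset.mem_range]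
      constructor
      · rintro ⟨b, hb, rfl⟩
        show k - 1 - b < k
        omega
      · intro ha; exact ⟨k - 1 - a, by omega, by omega⟩
    have hinj : Set.InjOn (fun j => k - 1 - j) (Finset.range k) := by
      intro a ha b hb hab
      simp only [Finset.coe_range, Set.mem_Iio] at ha hb
      simp only at hab
      omega
    have hiv := Finset.image_val_of_injOn hinj
    rw [himg] at hiv
    rw [← Finset.range_val]
    exact hiv.symm
  set L : List ℝ := (List.range k).map (fun j => c (s + 1 + j)) with hL_def
  set L' : List ℝ := (List.range k).map (fun j => -(m : ℝ) - c (r - j)) with hL'_def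
  have hLN : (↑L : Multiset ℝ) = N := hNlist.symm
  have hL'N : (↑L' : Multiset ℝ) = N := by
    have h1 : (↑L' : Multiset ℝ)
        = (Multiset.range k).map (fun j => -(m : ℝ) - c (r - j)) := by
      rw [hL'_def, ← Multiset.coe_range, Multiset.map_coe]
    rw [h1, ← hrefl, Multiset.map_map]
    have h2 : Multiset.map ((fun j => -(m : ℝ) - c (r - j)) ∘ (fun j => k - 1 - j))
        (Multiset.range k) = Multiset.map (fun j => -(m : ℝ) - c (s + 1 + j))
          (Multiset.range k) := by
      refine Multiset.map_congr rfl fun j hj => ?_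
      rw [Multiset.mem_range] at hj
      simp only [Function.comp_apply]
      congr 2
      omega
    rw [h2, ← hN', hNlist, Multiset.map_coe, ← Multiset.coe_range,
      Multiset.map_coe, List.map_map]
    congr 1
  have hLsorted : L.Pairwise (· ≥ ·) := by
    rw [hL_def, List.pairwise_map]
    refine (List.pairwise_lt_range (n := k)).imp_of_mem ?_
    intro a b ha hb hab
    rw [List.mem_range] at ha hb
    exact hanti (s + 1 + b) (by omega) (s + 1 + a) (by omega) (by omega)
  have hL'sorted : L'.Pairwise (· ≥ ·) := by
    rw [hL'_def, List.pairwise_map]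
    refine (List.pairwise_lt_range (n := k)).imp_of_mem ?_
    intro a b ha hb hab
    rw [List.mem_range] at ha hb
    have : c (r - a) ≤ c (r - b) := hanti (r - a) (by omega) (r - b) (by omega) (by omega)
    simp only [ge_iff_le]
    linarith
  have hperm : L.Perm L' := Multiset.coe_eq_coe.mp (by rw [hLN, hL'N])
  have hLL' : L = L' := List.Perm.eq_of_pairwise' hLsorted hL'sorted hperm
  -- conclude
  intro j hj1 hj2
  have hjk : j - 1 < k := by omega
  have hlen : j - 1 < L.length := by rw [hL_def]; simpa using hjk
  have hlen' : j - 1 < L'.length := by rw [hL'_def]; simpa using hjk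
  have hget : L[j-1]'hlen = L'[j-1]'hlen' := by simp only [hLL']
  have h2 : c (s + 1 + (j - 1)) = -(m : ℝ) - c (r - (j - 1)) := by
    simpa [hL_def, hL'_def] using hget
  have e1 : s + 1 + (j - 1) = s + j := by omega
  have e2 : r - (j - 1) = r + 1 - j := by omega
  rw [e1, e2] at h2
  linarith
end

section
/- In the setup below, let k_0, ℓ be integers with 0 ≤ k_0 ≤ r−1. Then condition (★)(k_0,ℓ) holds if and only if for every s ∈ ℤ with 0 ≤ k_0 + s·r_0 ≤ r−1 and all 1 ≤ i, j ≤ r: a_i + a_j = −ℓ + s·m_0 whenever i + j = r + 1 − (k_0 + s·r_0), and a_i + a_j = −ℓ − m + s·m_0 whenever i + j = 2r + 1 − (k_0 + s·r_0). -/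
/-- Membership in the set `𝒮(a,m)`: `j ∈ {1,…,r}`, `r₁ := r / gcd(m,r)` divides `j`,
and `b (i + j) = b i` for all `i ∈ ℤ`. -/
def SMem (r m : ℕ) (b : ℤ → ℝ) (j : ℕ) : Prop :=
  1 ≤ j ∧ j ≤ r ∧ (r / Nat.gcd m r) ∣ j ∧ ∀ i : ℤ, b (i + j) = b i

/-- Periodicity propagates to integer multiples of the period. -/
lemma bper_mul {b : ℤ → ℝ} {c : ℤ} (h : ∀ i, b (i + c) = b i) :
    ∀ (k : ℤ) (i : ℤ), b (i + k * c) = b i := by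
  intro k
  induction k using Int.induction_on with
  | zero => intro i; simp
  | succ n ih =>
    intro i
    have h1 : i + ((n : ℤ) + 1) * c = (i + n * c) + c := by ring
    rw [h1, h (i + n * c), ih]
  | pred n ih =>
    intro i
    have h2 := h (i + (-(n : ℤ) - 1) * c)
    have h1 : i + (-(n : ℤ) - 1) * c + c = i + (-(n : ℤ)) * c := by ring
    rw [h1] at h2
    rw [← h2, ih]

/-- In the setup (with `b i = r·a i + m·i` for `1 ≤ i ≤ r`, extended
`r`-periodically; `r₀ := min 𝒮(a,m)`; `m₀ := m·r₀/r` a positive integer), for integers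
`k₀, ℓ` with `0 ≤ k₀ ≤ r − 1`, condition (★)(k₀,ℓ) holds iff for every `s ∈ ℤ` with
`0 ≤ k₀ + s·r₀ ≤ r − 1` and all `1 ≤ i, j ≤ r`: `a i + a j = −ℓ + s·m₀` whenever
`i + j = r + 1 − (k₀ + s·r₀)`, and `a i + a j = −ℓ − m + s·m₀` whenever
`i + j = 2r + 1 − (k₀ + s·r₀)`. -/
theorem stmt_11 (r m : ℕ) (hr : 0 < r) (hm : 0 < m)
    (a : ℕ → ℝ)
    (hmono : ∀ i : ℕ, 1 ≤ i → i < r → a (i + 1) ≤ a i)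
    (hlast : a 1 - m ≤ a r)
    (b : ℤ → ℝ)
    (hb : ∀ i : ℕ, 1 ≤ i → i ≤ r → b (i : ℤ) = r * a i + m * i)
    (hbper : ∀ i : ℤ, b (i + r) = b i)
    (r₀ : ℕ) (hr₀mem : SMem r m b r₀) (hr₀min : ∀ j : ℕ, SMem r m b j → r₀ ≤ j)
    (m₀ : ℕ) (hm₀pos : 0 < m₀) (hm₀ : m₀ * r = m * r₀)
    (k₀ ℓ : ℤ) (hk₀ : 0 ≤ k₀) (hk₀' : k₀ ≤ (r : ℤ) - 1) :
    (∀ i j : ℕ, 1 ≤ i → i ≤ r → 1 ≤ j → j ≤ r →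
      ((i : ℤ) + j = r + 1 - k₀ → a i + a j = -(ℓ : ℝ)) ∧
      ((i : ℤ) + j = 2 * r + 1 - k₀ → a i + a j = -(ℓ : ℝ) - m)) ↔
    (∀ s : ℤ, 0 ≤ k₀ + s * r₀ → k₀ + s * r₀ ≤ (r : ℤ) - 1 →
      ∀ i j : ℕ, 1 ≤ i → i ≤ r → 1 ≤ j → j ≤ r →
        ((i : ℤ) + j = r + 1 - (k₀ + s * r₀) →
          a i + a j = -(ℓ : ℝ) + (s : ℝ) * m₀) ∧
        ((i : ℤ) + j = 2 * r + 1 - (k₀ + s * r₀) →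
          a i + a j = -(ℓ : ℝ) - m + (s : ℝ) * m₀)) := by
  have hrpos : (0 : ℤ) < r := by exact_mod_cast hr
  have hrne : (r : ℝ) ≠ 0 := by positivity
  constructor
  · intro hstar
    have key : ∀ (s d : ℤ) (i j : ℕ), 1 ≤ i → i ≤ r → 1 ≤ j → j ≤ r →
        (i : ℤ) + j = (r : ℤ) + 1 - k₀ - s * r₀ + d * r →
        a i + a j = -(ℓ : ℝ) + (s : ℝ) * m₀ - (d : ℝ) * m := by
      intro s d i j hi1 hir hj1 hjr hij
      set t : ℤ := (i : ℤ) + s * r₀ with ht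
      set q : ℤ := -((t - 1) / r) with hqdef
      set n' : ℤ := (t - 1) % r + 1 with hn'
      have hq : n' = t + q * r := by
        rw [hn', hqdef, Int.emod_def]; ring
      have hmod0 := Int.emod_nonneg (t - 1) (by omega : (r : ℤ) ≠ 0)
      have hmod1 := Int.emod_lt_of_pos (t - 1) hrpos
      have hn'1 : 1 ≤ n' := by omega
      have hn'r : n' ≤ r := by omega
      have hcast : ((n'.toNat : ℤ)) = n' := Int.toNat_of_nonneg (by omega)
      set n := n'.toNat with hndef
      have hn1 : 1 ≤ n := by omega
      have hnr : n ≤ r := by omega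
      -- b n' = b i
      have hbn : b n' = b ((i : ℤ)) := by
        rw [hq]
        rw [bper_mul hbper q t]
        exact bper_mul hr₀mem.2.2.2 s (i : ℤ)
      -- determine e := d + q ∈ {0, 1}
      have hsum : n' + (j : ℤ) = (r : ℤ) + 1 - k₀ + (d + q) * r := by
        rw [hq]; linear_combination hij
      have hjz1 : 1 ≤ (j : ℤ) := by exact_mod_cast hj1
      have hjzr : (j : ℤ) ≤ r := by exact_mod_cast hjr
      have hlb : (-1 : ℤ) * r < (d + q) * r := by omega
      have hub : (d + q) * r < 2 * r := by omega
      have he0 : -1 < d + q := lt_of_mul_lt_mul_right hlb (le_of_lt hrpos)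
      have he1 : d + q < 2 := lt_of_mul_lt_mul_right hub (le_of_lt hrpos)
      have hA : a n + a j = -(ℓ : ℝ) - ((d : ℝ) + (q : ℝ)) * m := by
        have hcase : d + q = 0 ∨ d + q = 1 := by omega
        rcases hcase with hc | hc
        · have := (hstar n j hn1 hnr hj1 hjr).1 (by rw [hcast, hsum, hc]; ring)
          rw [this]
          have hdq : (d : ℝ) + (q : ℝ) = 0 := by exact_mod_cast hc
          rw [hdq]; ring
        · have := (hstar n j hn1 hnr hj1 hjr).2 (by rw [hcast, hsum, hc]; ring)
          rw [this]
          have hdq : (d : ℝ) + (q : ℝ) = 1 := by exact_mod_cast hc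
          rw [hdq]; ring
      -- now the computation
      have E1 : b ((i : ℤ)) = r * a i + m * i := hb i hi1 hir
      have E3 : b n' = r * a n + m * ((n' : ℤ) : ℝ) := by
        rw [← hcast]; exact_mod_cast hb n hn1 hnr
      have E5 : ((n' : ℤ) : ℝ) = (i : ℝ) + (s : ℝ) * r₀ + (q : ℝ) * r := by
        rw [hq, ht]; push_cast; ring
      have hm₀R : (m₀ : ℝ) * r = (m : ℝ) * r₀ := by exact_mod_cast hm₀
      have hmain : (r : ℝ) * (a i + a j) =
          (r : ℝ) * (-(ℓ : ℝ) + (s : ℝ) * m₀ - (d : ℝ) * m) := by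
        linear_combination (r : ℝ) * hA - hbn - E1 + E3 + (m : ℝ) * E5 - (s : ℝ) * hm₀R
      exact mul_left_cancel₀ hrne hmain
    intro s hs1 hs2 i j hi1 hir hj1 hjr
    constructor
    · intro hij
      have := key s 0 i j hi1 hir hj1 hjr (by omega)
      simpa using this
    · intro hij
      have := key s 1 i j hi1 hir hj1 hjr (by omega)
      push_cast at this
      linarith
  · intro h i j hi1 hir hj1 hjr
    have h0 := h 0 (by simpa) (by simpa using hk₀') i j hi1 hir hj1 hjr
    constructor
    · intro hij
      have := h0.1 (by omega)
      simpa using this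
    · intro hij
      have := h0.2 (by omega)
      simpa using this
end

section
/- In the setup below, let k_0, ℓ be integers with 0 ≤ k_0 ≤ r−1. Then condition (★)(k_0,ℓ) holds if and only if for all 1 ≤ i, j ≤ r with i + j − 1 + k_0 ≡ 0 (mod r_0), one has a_i + a_j = −ℓ + m − (m_0/r_0)·(i + j − 1 + k_0). -/
private lemma shift_iter (f : ℤ → ℝ) (p : ℤ) (d : ℝ)
    (h : ∀ x, f (x + p) = f x - d) : ∀ (t : ℤ) (x : ℤ), f (x + t * p) = f x - t * d := by
  intro t
  induction t using Int.induction_on with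
  | zero => intro x; simp
  | succ n ih =>
      intro x
      have h1 : (x + ((n : ℤ) + 1) * p) = (x + (n : ℤ) * p) + p := by ring
      rw [h1, h, ih]
      push_cast
      ring
  | pred n ih =>
      intro x
      have h1 : (x + (-(n : ℤ) - 1) * p) + p = x + (-(n : ℤ)) * p := by ring
      have h2 := h (x + (-(n : ℤ) - 1) * p)
      rw [h1, ih] at h2
      push_cast at h2 ⊢
      linarith

/-- In the setup (with `b i = r·a i + m·i` for `1 ≤ i ≤ r`, extended
`r`-periodically; `r₀ := min 𝒮(a,m)`; `m₀ := m·r₀/r` a positive integer), for integers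
`k₀, ℓ` with `0 ≤ k₀ ≤ r − 1`, condition (★)(k₀,ℓ) holds iff for all `1 ≤ i, j ≤ r`
with `i + j − 1 + k₀ ≡ 0 (mod r₀)` one has
`a i + a j = −ℓ + m − (m₀/r₀)·(i + j − 1 + k₀)`. -/
theorem stmt_12 (r m : ℕ) (hr : 0 < r) (hm : 0 < m)
    (a : ℕ → ℝ)
    (hmono : ∀ i : ℕ, 1 ≤ i → i < r → a (i + 1) ≤ a i)
    (hlast : a 1 - m ≤ a r)
    (b : ℤ → ℝ)
    (hb : ∀ i : ℕ, 1 ≤ i → i ≤ r → b (i : ℤ) = r * a i + m * i)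
    (hbper : ∀ i : ℤ, b (i + r) = b i)
    (r₀ : ℕ) (hr₀mem : SMem r m b r₀) (hr₀min : ∀ j : ℕ, SMem r m b j → r₀ ≤ j)
    (m₀ : ℕ) (hm₀pos : 0 < m₀) (hm₀ : m₀ * r = m * r₀)
    (k₀ ℓ : ℤ) (hk₀ : 0 ≤ k₀) (hk₀' : k₀ ≤ (r : ℤ) - 1) :
    (∀ i j : ℕ, 1 ≤ i → i ≤ r → 1 ≤ j → j ≤ r →
      ((i : ℤ) + j = r + 1 - k₀ → a i + a j = -(ℓ : ℝ)) ∧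
      ((i : ℤ) + j = 2 * r + 1 - k₀ → a i + a j = -(ℓ : ℝ) - m)) ↔
    (∀ i j : ℕ, 1 ≤ i → i ≤ r → 1 ≤ j → j ≤ r →
      (r₀ : ℤ) ∣ ((i : ℤ) + j - 1 + k₀) →
      a i + a j = -(ℓ : ℝ) + m - ((m₀ : ℝ) / r₀) * (((i : ℤ) + j - 1 + k₀ : ℤ) : ℝ)) := by
  have hrR : (r : ℝ) ≠ 0 := by positivity
  have hr₀pos : 0 < r₀ := hr₀mem.1
  have hr₀r : r₀ ≤ r := hr₀mem.2.1
  have hr₀R : (r₀ : ℝ) ≠ 0 := by positivity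
  have hbr₀ : ∀ i : ℤ, b (i + r₀) = b i := hr₀mem.2.2.2
  set c : ℤ → ℝ := fun x => (b x - m * x) / r with hcdef
  -- c agrees with a on [1, r]
  have hca : ∀ i : ℕ, 1 ≤ i → i ≤ r → c (i : ℤ) = a i := by
    intro i h1 h2
    simp only [hcdef]
    rw [hb i h1 h2]
    push_cast
    field_simp
    ring
  -- c shifts by -m under +r and by -m₀ under +r₀
  have hcr : ∀ x : ℤ, c (x + r) = c x - m := by
    intro x
    simp only [hcdef]
    rw [hbper]
    push_cast
    field_simp
    ring
  have hcr₀ : ∀ x : ℤ, c (x + r₀) = c x - m₀ := by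
    intro x
    simp only [hcdef]
    rw [hbr₀]
    have hmr : (m : ℝ) * r₀ = m₀ * r := by exact_mod_cast (hm₀.symm)
    push_cast
    field_simp
    linarith [hmr]
  have hcrT := shift_iter c r m hcr
  have hcr₀T := shift_iter c r₀ m₀ hcr₀
  -- the f-function is r-periodic
  have hfper : ∀ (t : ℤ) (x : ℤ),
      c (x + t * r) + c ((r : ℤ) + 1 - k₀ - (x + t * r)) = c x + c ((r : ℤ) + 1 - k₀ - x) := by
    intro t x
    have h1 := hcrT t x
    have h2 := hcr₀T 0 ((r : ℤ) + 1 - k₀ - x)  -- dummy, not used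
    have e : (r : ℤ) + 1 - k₀ - (x + t * r) = ((r : ℤ) + 1 - k₀ - x) + (-t) * r := by ring
    rw [e, h1, hcrT (-t) ((r : ℤ) + 1 - k₀ - x)]
    push_cast
    ring
  -- reduction of an arbitrary integer into [1, r] modulo r
  have hred : ∀ i : ℤ, ∃ (k : ℕ) (t : ℤ), 1 ≤ k ∧ k ≤ r ∧ i = (k : ℤ) + t * r := by
    intro i
    have h1 : (0 : ℤ) < r := by exact_mod_cast hr
    have h3 : 0 ≤ (i - 1) % r := Int.emod_nonneg _ (by omega)
    have h4 : (i - 1) % r < r := Int.emod_lt_of_pos _ h1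
    have key := Int.emod_add_mul_ediv (i - 1) (r : ℤ)
    refine ⟨((i - 1) % r).toNat + 1, (i - 1) / r, by omega, ?_, ?_⟩
    · have : (((i - 1) % r).toNat : ℤ) = (i - 1) % r := Int.toNat_of_nonneg h3
      omega
    · have ht : (((i - 1) % r).toNat : ℤ) = (i - 1) % r := Int.toNat_of_nonneg h3
      push_cast [ht]
      have hmc : (i - 1) / r * (r : ℤ) = (r : ℤ) * ((i - 1) / r) := mul_comm _ _
      linarith [key, hmc]
  -- the key computation relating (i,j) pairs with divisibility to the P-statement
  have key : ∀ (i j : ℕ) (t : ℤ), 1 ≤ i → i ≤ r → 1 ≤ j → j ≤ r →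
      ((i : ℤ) + j - 1 + k₀ = r₀ * t) →
      (c (i : ℤ) + c ((r : ℤ) + 1 - k₀ - i) = -(ℓ : ℝ) ↔
        a i + a j = -(ℓ : ℝ) + m - ((m₀ : ℝ) / r₀) * (((i : ℤ) + j - 1 + k₀ : ℤ) : ℝ)) := by
    intro i j t hi1 hi2 hj1 hj2 ht
    have hai := hca i hi1 hi2
    have haj := hca j hj1 hj2
    have e : (j : ℤ) = (((r : ℤ) + 1 - k₀ - (i : ℤ)) + t * (r₀ : ℤ)) + (-1) * (r : ℤ) := by
      linarith
    have hcj : c (j : ℤ) = c ((r : ℤ) + 1 - k₀ - i) - t * m₀ + m := by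
      rw [e, hcrT (-1) _, hcr₀T t _]
      push_cast
      ring
    have hcast : ((((i : ℤ) + j - 1 + k₀ : ℤ)) : ℝ) = (r₀ : ℝ) * t := by
      have := congrArg (fun z : ℤ => (z : ℝ)) ht
      push_cast at this
      push_cast
      linarith
    have hmul : ((m₀ : ℝ) / r₀) * ((r₀ : ℝ) * t) = (t : ℝ) * m₀ := by
      field_simp
    rw [hcast, hmul, ← hai, ← haj, hcj]
    constructor <;> intro h <;> linarith
  constructor
  · -- (★) → RHS, via P
    intro hL
    have hP : ∀ i : ℤ, c i + c ((r : ℤ) + 1 - k₀ - i) = -(ℓ : ℝ) := by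
      intro i
      obtain ⟨k, t, hk1, hk2, hit⟩ := hred i
      rw [hit, hfper t (k : ℤ)]
      by_cases hcase : (k : ℤ) + k₀ ≤ r
      · -- use the first clause of (★)
        set jZ : ℤ := (r : ℤ) + 1 - k₀ - k with hjZ
        have hjZ1 : 1 ≤ jZ := by omega
        have hjZ2 : jZ ≤ r := by
          have : 1 ≤ (k : ℤ) + k₀ := by omega
          omega
        set jn : ℕ := jZ.toNat with hjn
        have hjnc : (jn : ℤ) = jZ := Int.toNat_of_nonneg (by omega)
        have h1 : 1 ≤ jn := by omega
        have h2 : jn ≤ r := by omega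
        have := (hL k jn hk1 hk2 h1 h2).1 (by omega)
        rw [hca k hk1 hk2, ← hjnc, hca jn h1 h2]
        linarith
      · -- use the second clause of (★)
        set jZ : ℤ := 2 * (r : ℤ) + 1 - k₀ - k with hjZ
        have hjZ1 : 1 ≤ jZ := by omega
        have hjZ2 : jZ ≤ r := by omega
        set jn : ℕ := jZ.toNat with hjn
        have hjnc : (jn : ℤ) = jZ := Int.toNat_of_nonneg (by omega)
        have h1 : 1 ≤ jn := by omega
        have h2 : jn ≤ r := by omega
        have hstar := (hL k jn hk1 hk2 h1 h2).2 (by omega)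
        rw [hca k hk1 hk2]
        have ej : (r : ℤ) + 1 - k₀ - (k : ℤ) = (jn : ℤ) + (-1) * (r : ℤ) := by omega
        rw [ej, hcrT (-1) (jn : ℤ), hca jn h1 h2]
        push_cast
        linarith
    intro i j hi1 hi2 hj1 hj2 hdvd
    obtain ⟨t, ht⟩ := hdvd
    exact (key i j t hi1 hi2 hj1 hj2 ht).1 (hP (i : ℤ))
  · -- RHS → (★), via P
    intro hR
    have hP : ∀ i : ℤ, c i + c ((r : ℤ) + 1 - k₀ - i) = -(ℓ : ℝ) := by
      intro i
      obtain ⟨k, t, hk1, hk2, hit⟩ := hred i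
      rw [hit, hfper t (k : ℤ)]
      -- choose j in [1, r] with r₀ ∣ k + j - 1 + k₀
      have hr₀Z : (0 : ℤ) < r₀ := by exact_mod_cast hr₀pos
      set s : ℤ := (-(k + k₀ - 1)) % r₀ with hs
      have hs0 : 0 ≤ s := Int.emod_nonneg _ (by omega)
      have hs1 : s < r₀ := Int.emod_lt_of_pos _ hr₀Z
      have hkey := Int.emod_add_mul_ediv (-((k : ℤ) + k₀ - 1)) (r₀ : ℤ)
      set q : ℤ := (-((k : ℤ) + k₀ - 1)) / r₀ with hq
      -- hkey : s + r₀ * q = -(k + k₀ - 1)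
      set jZ : ℤ := if s = 0 then (r₀ : ℤ) else s with hjZ
      have hjZ1 : 1 ≤ jZ := by
        by_cases h : s = 0 <;> simp [hjZ, h] <;> omega
      have hjZ2 : jZ ≤ r₀ := by
        by_cases h : s = 0 <;> simp [hjZ, h] <;> omega
      set jn : ℕ := jZ.toNat with hjn
      have hjnc : (jn : ℤ) = jZ := Int.toNat_of_nonneg (by omega)
      have h1 : 1 ≤ jn := by omega
      have h2 : jn ≤ r := by omega
      have hdvd : (r₀ : ℤ) ∣ ((k : ℤ) + jn - 1 + k₀) := by
        by_cases h : s = 0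
        · refine ⟨1 - q, ?_⟩
          have : jZ = (r₀ : ℤ) := by simp [hjZ, h]
          rw [hjnc, this]
          have : s + (r₀ : ℤ) * q = -((k : ℤ) + k₀ - 1) := hkey
          rw [h] at this
          ring_nf
          linarith [this]
        · refine ⟨-q, ?_⟩
          have : jZ = s := by simp [hjZ, h]
          rw [hjnc, this]
          have : s + (r₀ : ℤ) * q = -((k : ℤ) + k₀ - 1) := hkey
          ring_nf
          linarith [this]
      obtain ⟨t', ht'⟩ := hdvd
      exact (key k jn t' hk1 hk2 h1 h2 ht').2
        (hR k jn hk1 hk2 h1 h2 ⟨t', ht'⟩)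
    intro i j hi1 hi2 hj1 hj2
    constructor
    · intro hij
      have hPi := hP (i : ℤ)
      have e : (r : ℤ) + 1 - k₀ - (i : ℤ) = (j : ℤ) := by omega
      rw [e, hca i hi1 hi2, hca j hj1 hj2] at hPi
      linarith
    · intro hij
      have hPi := hP (i : ℤ)
      have e : (r : ℤ) + 1 - k₀ - (i : ℤ) = (j : ℤ) + (-1) * (r : ℤ) := by omega
      rw [e, hcrT (-1) (j : ℤ), hca i hi1 hi2, hca j hj1 hj2] at hPi
      push_cast at hPi
      linarith
end

section
/- In the setup below: (1) r ∈ 𝒮(a,m); (2) if j, j' ∈ 𝒮(a,m) and j'' ∈ {1,…,r} satisfies j'' ≡ j + j' (mod r), then j'' ∈ 𝒮(a,m); (3) consequently r_0 := min 𝒮(a,m) divides every element of 𝒮(a,m), r_0 divides r, and r divides m·r_0. -/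
/-- In the setup (with `b i = r·a i + m·i` for `1 ≤ i ≤ r`, extended
`r`-periodically):
(1) `r ∈ 𝒮(a,m)`;
(2) if `j, j' ∈ 𝒮(a,m)` and `j'' ∈ {1,…,r}` satisfies `j'' ≡ j + j' (mod r)`, then
`j'' ∈ 𝒮(a,m)`;
(3) consequently `r₀ := min 𝒮(a,m)` divides every element of `𝒮(a,m)`, `r₀` divides
`r`, and `r` divides `m·r₀`. -/
theorem stmt_13 (r m : ℕ) (hr : 0 < r) (hm : 0 < m)
    (a : ℕ → ℝ)
    (hmono : ∀ i : ℕ, 1 ≤ i → i < r → a (i + 1) ≤ a i)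
    (hlast : a 1 - m ≤ a r)
    (b : ℤ → ℝ)
    (hb : ∀ i : ℕ, 1 ≤ i → i ≤ r → b (i : ℤ) = r * a i + m * i)
    (hbper : ∀ i : ℤ, b (i + r) = b i) :
    SMem r m b r ∧
    (∀ j j' j'' : ℕ, SMem r m b j → SMem r m b j' →
      1 ≤ j'' → j'' ≤ r → j'' % r = (j + j') % r → SMem r m b j'') ∧
    (∀ r₀ : ℕ, SMem r m b r₀ → (∀ j : ℕ, SMem r m b j → r₀ ≤ j) →
      ((∀ j : ℕ, SMem r m b j → r₀ ∣ j) ∧ r₀ ∣ r ∧ r ∣ m * r₀)) := by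
  -- b is r-periodic for all integer multiples of r
  have hper : ∀ (k : ℤ) (i : ℤ), b (i + k * r) = b i := by
    intro k
    induction k using Int.induction_on with
    | zero => intro i; simp
    | succ n ih =>
      intro i
      have h1 : i + ((n : ℤ) + 1) * r = (i + n * r) + r := by ring
      rw [h1, hbper, ih]
    | pred n ih =>
      intro i
      have h1 : i + (-(n : ℤ) - 1) * r + r = i + (-(n : ℤ)) * r := by ring
      have := hbper (i + (-(n : ℤ) - 1) * r)
      rw [h1] at this
      rw [← this, ih]
  -- iterating a shift
  have hiter : ∀ (c : ℤ), (∀ i : ℤ, b (i + c) = b i) →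
      ∀ (n : ℕ) (i : ℤ), b (i + n * c) = b i := by
    intro c hc n
    induction n with
    | zero => intro i; simp
    | succ k ih =>
      intro i
      have h1 : i + ((k : ℤ) + 1) * c = (i + k * c) + c := by ring
      push_cast
      rw [h1, hc, ih]
  have hgdvd : (r / Nat.gcd m r) ∣ r := Nat.div_dvd_of_dvd (Nat.gcd_dvd_right m r)
  have part1 : SMem r m b r := ⟨hr, le_refl r, hgdvd, fun i => hbper i⟩
  refine ⟨part1, ?_, ?_⟩
  · -- part 2
    rintro j j' j'' ⟨hj1, hjr, hjd, hjs⟩ ⟨hj'1, hj'r, hj'd, hj's⟩ h1 h2 hmod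
    refine ⟨h1, h2, ?_, ?_⟩
    · -- r₁ ∣ j''
      have h3 : (r / Nat.gcd m r) ∣ (j + j') := Dvd.dvd.add hjd hj'd
      have h4 : (r / Nat.gcd m r) ∣ (j + j') % r := by
        rw [Nat.dvd_mod_iff hgdvd]; exact h3
      rw [← hmod] at h4
      rw [← Nat.div_add_mod j'' r]
      exact Dvd.dvd.add (Dvd.dvd.mul_right hgdvd _) h4
    · -- shift by j''
      intro i
      have hmeq : ((j'' : ℤ)) % (r : ℤ) = ((j : ℤ) + (j' : ℤ)) % (r : ℤ) := by
        have := congrArg (Nat.cast : ℕ → ℤ) hmod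
        push_cast at this
        exact this
      have hdvd : (r : ℤ) ∣ ((j : ℤ) + j' - j'') := Int.ModEq.dvd hmeq
      obtain ⟨k, hk⟩ := hdvd
      have h5 : i + (j'' : ℤ) + k * r = i + j + j' := by linear_combination -hk
      calc b (i + j'') = b (i + j'' + k * r) := (hper k (i + j'')).symm
        _ = b (i + j + j') := by rw [h5]
        _ = b (i + j) := by rw [show i + (j:ℤ) + j' = (i + j) + j' from by ring, hj's]
        _ = b i := hjs i
  · -- part 3
    rintro r₀ ⟨hr₀1, hr₀r, hr₀d, hr₀s⟩ hmin
    have key : ∀ j : ℕ, SMem r m b j → r₀ ∣ j := by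
      rintro j ⟨hj1, hjr, hjd, hjs⟩
      by_contra hnd
      set t := j % r₀ with ht
      have htpos : 0 < t := Nat.pos_of_ne_zero (fun h => hnd (Nat.dvd_of_mod_eq_zero h))
      have htlt : t < r₀ := Nat.mod_lt _ hr₀1
      have htS : SMem r m b t := by
        refine ⟨htpos, le_trans (le_of_lt htlt) hr₀r, ?_, ?_⟩
        · rw [ht, Nat.dvd_mod_iff hr₀d]; exact hjd
        · intro i
          have hj : j = r₀ * (j / r₀) + t := (Nat.div_add_mod j r₀).symm
          have hjz : (j : ℤ) = (r₀ : ℤ) * ((j / r₀ : ℕ) : ℤ) + (t : ℤ) := by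
            exact_mod_cast congrArg (Nat.cast : ℕ → ℤ) hj
          have h6 : i + (t : ℤ) + (j / r₀ : ℕ) * r₀ = i + j := by
            linear_combination -hjz
          calc b (i + t) = b (i + t + (j / r₀ : ℕ) * r₀) :=
                (hiter (r₀ : ℤ) hr₀s (j / r₀) (i + t)).symm
            _ = b (i + j) := by rw [h6]
            _ = b i := hjs i
      exact absurd (hmin t htS) (not_le.mpr htlt)
    have hdr : r₀ ∣ r := key r part1
    refine ⟨key, hdr, ?_⟩
    -- r ∣ m * r₀ : since r/gcd(m,r) ∣ r₀ and r ∣ m * (r/gcd(m,r))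
    obtain ⟨c, hc⟩ := hr₀d
    have hg : Nat.gcd m r ∣ m := Nat.gcd_dvd_left m r
    obtain ⟨m', hm'⟩ := hg
    have hgr : Nat.gcd m r ∣ r := Nat.gcd_dvd_right m r
    have hg2 : Nat.gcd m r ∣ m := Nat.gcd_dvd_left m r
    have h7 : m * (r / Nat.gcd m r) = (m / Nat.gcd m r) * r := by
      rw [← Nat.mul_div_assoc m hgr, mul_comm m r, Nat.mul_div_assoc r hg2,
        mul_comm r (m / Nat.gcd m r)]
    have hdr2 : r ∣ m * (r / Nat.gcd m r) := by
      rw [h7]; exact dvd_mul_left r _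
    calc r ∣ m * (r / Nat.gcd m r) := hdr2
      _ ∣ m * r₀ := by rw [hc, ← mul_assoc]; exact dvd_mul_right _ c
end

section
/- Let r_0, j_0 be positive integers, r := r_0·j_0, let m be a positive integer divisible by j_0, m_0 := m/j_0, τ_0 := exp(2π√−1/j_0), and q ∈ ℂ∖{0}. Let V := ℂ^r with standard basis e_1,…,e_r and let f be the linear endomorphism with f(e_i) = e_{i+1} for 1 ≤ i ≤ r−1 and f(e_r) = q^m·e_1. For 1 ≤ i ≤ r_0 and 0 ≤ s ≤ j_0−1 set x_i^{(s)} := Σ_{k=0}^{j_0−1} τ_0^{sk}·q^{−k·m_0}·e_{i+k·r_0}. Then f(x_i^{(s)}) = x_{i+1}^{(s)} for 1 ≤ i ≤ r_0−1, f(x_{r_0}^{(s)}) = q^{m_0}·τ_0^{−s}·x_1^{(s)}, and the r vectors x_i^{(s)} (1 ≤ i ≤ r_0, 0 ≤ s ≤ j_0−1) form a basis of ℂ^r. -/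
lemma root_sum {ζ : ℂ} {n : ℕ} (h : IsPrimitiveRoot ζ n) (d : ℕ) :
    ∑ s ∈ Finset.range n, ζ ^ (s * d) = if n ∣ d then (n : ℂ) else 0 := by
  have hpow : ∀ s, ζ ^ (s * d) = (ζ ^ d) ^ s := fun s => by rw [← pow_mul, mul_comm]
  simp_rw [hpow]
  by_cases hd : n ∣ d
  · have h1 : ζ ^ d = 1 := (h.pow_eq_one_iff_dvd d).mpr hd
    simp [h1, hd]
  · have hne : ζ ^ d ≠ 1 := fun hone => hd ((h.pow_eq_one_iff_dvd d).mp hone)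
    rw [geom_sum_eq hne]
    have h1 : (ζ ^ d) ^ n = 1 := by
      rw [← pow_mul, mul_comm, pow_mul, h.pow_eq_one, one_pow]
    simp [h1, hd]

/-- Let `r₀, j₀ ≥ 1`, `r := r₀·j₀`, let `m ≥ 1` be divisible by
`j₀` with `m₀ := m/j₀`, `τ₀ := exp(2π√−1/j₀)`, and `q ≠ 0`.  On `V = ℂ^r` with
standard basis `e 1, …, e r` (1-based: `e (i+1) = Pi.single i 1` for `i : Fin r`),
let `f` be the linear endomorphism with `f(e_i) = e_{i+1}` (`1 ≤ i ≤ r−1`) and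
`f(e_r) = q^m·e_1`.  For `1 ≤ i ≤ r₀`, `0 ≤ s ≤ j₀−1` set
`x_i^{(s)} := Σ_{k=0}^{j₀−1} τ₀^{sk}·q^{−k·m₀}·e_{i+k·r₀}`.  Then
`f(x_i^{(s)}) = x_{i+1}^{(s)}` for `1 ≤ i ≤ r₀−1`,
`f(x_{r₀}^{(s)}) = q^{m₀}·τ₀^{−s}·x_1^{(s)}`, and the `r` vectors `x_i^{(s)}` form a
basis of `ℂ^r`. -/
theorem stmt_15 (r₀ j₀ m : ℕ) (hr₀ : 0 < r₀) (hj₀ : 0 < j₀) (hm : 0 < m)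
    (m₀ : ℕ) (hm₀ : m = j₀ * m₀)
    (τ₀ : ℂ) (hτ₀ : τ₀ = Complex.exp (2 * (Real.pi : ℂ) * Complex.I / j₀))
    (q : ℂ) (hq : q ≠ 0)
    (e : ℕ → Fin (r₀ * j₀) → ℂ)
    (he : ∀ i : Fin (r₀ * j₀), e ((i : ℕ) + 1) = Pi.single i 1)
    (f : (Fin (r₀ * j₀) → ℂ) →ₗ[ℂ] (Fin (r₀ * j₀) → ℂ))
    (hf1 : ∀ i : ℕ, 1 ≤ i → i ≤ r₀ * j₀ - 1 → f (e i) = e (i + 1))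
    (hf2 : f (e (r₀ * j₀)) = q ^ m • e 1)
    (x : ℕ → ℕ → Fin (r₀ * j₀) → ℂ)
    (hx : ∀ i s : ℕ, 1 ≤ i → i ≤ r₀ → s ≤ j₀ - 1 →
      x i s = ∑ k ∈ Finset.range j₀, (τ₀ ^ (s * k) * q⁻¹ ^ (k * m₀)) • e (i + k * r₀)) :
    (∀ s : ℕ, s ≤ j₀ - 1 →
      (∀ i : ℕ, 1 ≤ i → i ≤ r₀ - 1 → f (x i s) = x (i + 1) s) ∧
      f (x r₀ s) = (q ^ m₀ * τ₀⁻¹ ^ s) • x 1 s) ∧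
    LinearIndependent ℂ (fun p : Fin r₀ × Fin j₀ => x ((p.1 : ℕ) + 1) (p.2 : ℕ)) ∧
    Submodule.span ℂ (Set.range (fun p : Fin r₀ × Fin j₀ => x ((p.1 : ℕ) + 1) (p.2 : ℕ)))
      = ⊤ := by
  obtain ⟨j₁, rfl⟩ : ∃ j₁, j₀ = j₁ + 1 := ⟨j₀ - 1, by omega⟩
  have hprim : IsPrimitiveRoot τ₀ (j₁ + 1) := by
    rw [hτ₀]; exact Complex.isPrimitiveRoot_exp (j₁ + 1) (by omega)
  have hτne : τ₀ ≠ 0 := fun h0 => by simp [hτ₀, Complex.exp_ne_zero] at h0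
  have hτ1 : τ₀ ^ (j₁ + 1) = 1 := hprim.pow_eq_one
  have hj0c : ((j₁ + 1 : ℕ) : ℂ) ≠ 0 := Nat.cast_ne_zero.mpr (by omega)
  have key : ∀ i k : ℕ, i ≤ r₀ → k < j₁ + 1 → i + k * r₀ ≤ r₀ * (j₁ + 1) := by
    intro i k h2 h3
    calc i + k * r₀ ≤ r₀ + k * r₀ := Nat.add_le_add_right h2 _
      _ = (k + 1) * r₀ := by ring
      _ ≤ (j₁ + 1) * r₀ := Nat.mul_le_mul_right _ h3
      _ = r₀ * (j₁ + 1) := Nat.mul_comm _ _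
  have hB : ∀ i k : ℕ, 1 ≤ i → i ≤ r₀ → k < j₁ + 1 →
      (∑ s ∈ Finset.range (j₁ + 1), τ₀ ^ (s * (j₁ + 1 - k)) • x i s)
        = ((((j₁ + 1 : ℕ) : ℂ)) * q⁻¹ ^ (k * m₀)) • e (i + k * r₀) := by
    intro i k hi1 hi2 hk
    have inner : ∀ k' < j₁ + 1,
        (∑ s ∈ Finset.range (j₁ + 1),
            τ₀ ^ (s * (j₁ + 1 - k)) • ((τ₀ ^ (s * k') * q⁻¹ ^ (k' * m₀)) • e (i + k' * r₀)))
          = ((if (j₁ + 1) ∣ (j₁ + 1 - k + k') then ((j₁ + 1 : ℕ) : ℂ) else 0)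
              * q⁻¹ ^ (k' * m₀)) • e (i + k' * r₀) := by
      intro k' hk'
      rw [← root_sum hprim (j₁ + 1 - k + k'), Finset.sum_mul, Finset.sum_smul]
      refine Finset.sum_congr rfl fun s hs => ?_
      rw [smul_smul, ← mul_assoc, ← pow_add, ← Nat.mul_add]
    rw [Finset.sum_congr rfl (fun s hs => by
        rw [hx i s hi1 hi2 (by have := Finset.mem_range.mp hs; omega), Finset.smul_sum]),
      Finset.sum_comm,
      Finset.sum_congr rfl (fun k' hk' => inner k' (Finset.mem_range.mp hk')),
      Finset.sum_eq_single k]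
    · rw [if_pos (show (j₁ + 1) ∣ (j₁ + 1 - k + k) from by
        rw [show j₁ + 1 - k + k = j₁ + 1 from by omega])]
    · intro k' hk' hne
      rw [if_neg, zero_mul, zero_smul]
      intro hdvd
      have hd0 : j₁ + 1 - k + k' ≠ 0 := by omega
      have hlt : j₁ + 1 - k + k' < 2 * (j₁ + 1) := by
        have := Finset.mem_range.mp hk'; omega
      have := Nat.eq_of_dvd_of_lt_two_mul hd0 hdvd hlt
      omega
    · intro hk2; exact absurd (Finset.mem_range.mpr hk) hk2
  have hspan : Submodule.span ℂ
      (Set.range (fun p : Fin r₀ × Fin (j₁ + 1) => x ((p.1 : ℕ) + 1) (p.2 : ℕ))) = ⊤ := by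
    rw [eq_top_iff, ← (Pi.basisFun ℂ (Fin (r₀ * (j₁ + 1)))).span_eq]
    refine Submodule.span_le.mpr ?_
    rintro _ ⟨n, rfl⟩
    rw [Pi.basisFun_apply, ← he n]
    have hn : (n : ℕ) < r₀ * (j₁ + 1) := n.isLt
    have hii : (n : ℕ) % r₀ < r₀ := Nat.mod_lt _ hr₀
    have hik : (n : ℕ) = (n : ℕ) % r₀ + ((n : ℕ) / r₀) * r₀ := (Nat.mod_add_div' _ _).symm
    have hkk : (n : ℕ) / r₀ < j₁ + 1 := by
      rw [Nat.div_lt_iff_lt_mul hr₀]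
      calc (n : ℕ) < r₀ * (j₁ + 1) := hn
        _ = (j₁ + 1) * r₀ := Nat.mul_comm _ _
    set i := (n : ℕ) % r₀ with hidef
    set k := (n : ℕ) / r₀ with hkdef
    have heq : e ((n : ℕ) + 1)
        = ((((j₁ + 1 : ℕ) : ℂ))⁻¹ * q ^ (k * m₀)) •
            ∑ s ∈ Finset.range (j₁ + 1), τ₀ ^ (s * (j₁ + 1 - k)) • x (i + 1) s := by
      rw [show (n : ℕ) + 1 = (i + 1) + k * r₀ from by rw [hik]; ring,
        hB (i + 1) k (by omega) hii hkk, smul_smul,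
        show (((j₁ + 1 : ℕ) : ℂ))⁻¹ * q ^ (k * m₀) * ((((j₁ + 1 : ℕ) : ℂ)) * q⁻¹ ^ (k * m₀)) = 1
          from by rw [inv_pow, mul_mul_mul_comm, inv_mul_cancel₀ hj0c,
            mul_inv_cancel₀ (pow_ne_zero _ hq), one_mul], one_smul]
    rw [heq]
    exact Submodule.smul_mem _ _ (Submodule.sum_mem _ fun s hs => Submodule.smul_mem _ _
      (Submodule.subset_span ⟨(⟨i, hii⟩, ⟨s, Finset.mem_range.mp hs⟩), rfl⟩))
  refine ⟨fun s hs => ⟨fun i hi1 hi2 => ?_, ?_⟩, ?_, hspan⟩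
  · -- f (x i s) = x (i+1) s for 1 ≤ i ≤ r₀ - 1
    have hi2' : i + 1 ≤ r₀ := by omega
    rw [hx i s hi1 (by omega) hs, hx (i + 1) s (by omega) hi2' hs, map_sum]
    refine Finset.sum_congr rfl fun k hk => ?_
    have hk' : k < j₁ + 1 := Finset.mem_range.mp hk
    have hb1 : 1 ≤ i + k * r₀ := le_trans hi1 (Nat.le_add_right _ _)
    have hb2 : i + k * r₀ ≤ r₀ * (j₁ + 1) - 1 := by
      refine Nat.le_sub_of_add_le ?_
      have := key (i + 1) k hi2' hk'
      linarith
    rw [map_smul, hf1 _ hb1 hb2, show i + 1 + k * r₀ = i + k * r₀ + 1 from by ring]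
  · -- f (x r₀ s) = (q^m₀ * τ₀⁻¹^s) • x 1 s
    rw [hx r₀ s hr₀ le_rfl hs, map_sum, Finset.sum_range_succ,
      hx 1 s le_rfl hr₀ hs, Finset.smul_sum, Finset.sum_range_succ']
    congr 1
    · refine Finset.sum_congr rfl fun k hk => ?_
      have hk' : k < j₁ := Finset.mem_range.mp hk
      have hb1 : 1 ≤ r₀ + k * r₀ := le_trans hr₀ (Nat.le_add_right _ _)
      have hb2 : r₀ + k * r₀ ≤ r₀ * (j₁ + 1) - 1 := by
        refine Nat.le_sub_of_add_le ?_
        have := key r₀ (k + 1) le_rfl (by omega)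
        have h' : (k + 1) * r₀ = k * r₀ + r₀ := by ring
        linarith
      rw [map_smul, hf1 _ hb1 hb2, show 1 + (k + 1) * r₀ = r₀ + k * r₀ + 1 from by ring,
        smul_smul]
      congr 1
      have hsplit : τ₀ ^ (s * (k + 1)) = τ₀ ^ (s * k) * τ₀ ^ s := by
        rw [show s * (k + 1) = s * k + s from by ring, pow_add]
      rw [hsplit]
      field_simp
      have hq' : q ^ m₀ * q⁻¹ ^ m₀ = 1 := by rw [← mul_pow, mul_inv_cancel₀ hq, one_pow]
      have hτ' : τ₀ ^ s * τ₀⁻¹ ^ s = 1 := by rw [← mul_pow, mul_inv_cancel₀ hτne, one_pow]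
      linear_combination (-(q⁻¹ ^ (k * m₀))) * hq' - q⁻¹ ^ (k * m₀) * q ^ m₀ * q⁻¹ ^ m₀ * hτ'
    · rw [map_smul, show r₀ + j₁ * r₀ = r₀ * (j₁ + 1) from by ring, hf2, smul_smul, smul_smul,
        show 1 + 0 * r₀ = 1 from by ring]
      congr 1
      have h1 : τ₀ ^ (s * j₁) * τ₀ ^ s = 1 := by
        rw [← pow_add, show s * j₁ + s = s * (j₁ + 1) from by ring, mul_comm,
          pow_mul, hτ1, one_pow]
      have h2 : τ₀⁻¹ ^ s = τ₀ ^ (s * j₁) := by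
        rw [inv_pow]
        exact (eq_inv_of_mul_eq_one_right (by rw [mul_comm]; exact h1)).symm
      rw [h2, hm₀, show (j₁ + 1) * m₀ = j₁ * m₀ + m₀ from by ring, pow_add]
      field_simp
      have hq2 : q ^ (j₁ * m₀) * q⁻¹ ^ (j₁ * m₀) = 1 := by
        rw [← mul_pow, mul_inv_cancel₀ hq, one_pow]
      linear_combination hq2
  · -- linear independence
    exact linearIndependent_of_top_le_span_of_card_eq_finrank hspan.ge
      (by simp [Module.finrank_fintype_fun_eq_card])
end

section
/- Let V be a finite-dimensional complex vector space, C a nondegenerate symmetric ℂ-bilinear form on V, and h a nondegenerate Hermitian form on V (ℂ-linear in the first variable, with h(v,u) equal to the complex conjugate of h(u,v)). For f in the dual space V*, let u_f ∈ V be the unique vector with f(x) = h(x, u_f) for all x ∈ V, and define the Hermitian form h^∨ on V* by h^∨(f,g) := h(u_g, u_f). Assume the compatibility condition: h^∨(C(u,·), C(v,·)) = h(u,v) for all u, v ∈ V. Let κ : V → V be the map sending v to the unique vector κ(v) with h(u,v) = C(u, κ(v)) for all u ∈ V (κ is conjugate-linear). Then κ ∘ κ = id_V. -/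
/-- Let `V` be a finite-dimensional complex vector space, `Cb` a
nondegenerate symmetric `ℂ`-bilinear form on `V` (nondegenerate: the induced map
`V → V*`, `u ↦ Cb u`, is bijective), and `h` a nondegenerate Hermitian form on `V`
(`ℂ`-linear in the first variable, `h v u = conj (h u v)`).  For `f ∈ V*`, let
`uvec f ∈ V` be the (unique) vector with `f x = h x (uvec f)` for all `x`, and
define `h^∨` on `V*` by `h^∨(f,g) := h (uvec g) (uvec f)`.  Assume the
compatibility `h^∨(Cb u, Cb v) = h u v`, i.e. `h (uvec (Cb v)) (uvec (Cb u)) = h u v`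
for all `u, v`.  Let `κ : V → V` be the map with `h u v = Cb u (κ v)` for all
`u, v`.  Then `κ ∘ κ = id`. -/
theorem stmt_17 (V : Type*) [AddCommGroup V] [Module ℂ V] [FiniteDimensional ℂ V]
    (Cb : V →ₗ[ℂ] V →ₗ[ℂ] ℂ)
    (hCsymm : ∀ u v : V, Cb u v = Cb v u)
    (hCnd : Function.Bijective fun u : V => Cb u)
    (h : V → V → ℂ)
    (hadd : ∀ u u' v : V, h (u + u') v = h u v + h u' v)
    (hsmul : ∀ (a : ℂ) (u v : V), h (a • u) v = a * h u v)
    (hconj : ∀ u v : V, h v u = starRingEnd ℂ (h u v))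
    (hnd : ∀ u : V, (∀ v : V, h u v = 0) → u = 0)
    (uvec : (V →ₗ[ℂ] ℂ) → V)
    (huvec : ∀ (f : V →ₗ[ℂ] ℂ) (x : V), f x = h x (uvec f))
    (hcompat : ∀ u v : V, h (uvec (Cb v)) (uvec (Cb u)) = h u v)
    (κ : V → V)
    (hκ : ∀ u v : V, h u v = Cb u (κ v)) :
    ∀ v : V, κ (κ v) = v := by
  have hinj : Function.Injective fun u : V => Cb u := hCnd.1
  have key : ∀ v : V, κ v = uvec (Cb v) := by
    intro v
    apply hinj
    ext u
    show Cb (κ v) u = Cb (uvec (Cb v)) u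
    rw [← hCsymm u (κ v), ← hκ u v, ← hcompat u v, ← huvec (Cb u) (uvec (Cb v)),
      hCsymm u (uvec (Cb v))]
  intro v
  apply hinj
  ext u
  show Cb (κ (κ v)) u = Cb v u
  rw [← hCsymm u (κ (κ v)), ← hκ u (κ v), key v, ← huvec (Cb v) u]
end
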